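/- arXiv:2403.02104 — 5 statements merged into one kernel-verified Lean document; each statement's English description precedes it below -/
import Mathlib

section
/- Let m ≥ 2 be an integer and let u : ℝ^m ∖ {0} → ℝ^{m²} be the Misawa–Nakauchi map with components u_{ij}(x) = (1/√(m(m−1)))(−δ_{ij} + m x_i x_j / r²). Then for every x ∈ ℝ^m ∖ {0} the squared norm of its total derivative satisfies |∇u(x)|² = 2m / r(x)², where |∇u|² = Σ_{k,i,j} (∂_k u_{ij})². -/
noncomputable section

/-- Partial derivative of `f` in the `k`-th coordinate direction. -/
def pd {m : ℕ} (k : Fin m) (f : EuclideanSpace ℝ (Fin m) → ℝ)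
    (x : EuclideanSpace ℝ (Fin m)) : ℝ :=
  fderiv ℝ f x (EuclideanSpace.single k 1)

/-- The Misawa–Nakauchi map `u_{ij}(x) = (1/√(m(m−1)))(−δ_{ij} + m xᵢxⱼ/r²)`. -/
def uMN (m : ℕ) (i j : Fin m) (x : EuclideanSpace ℝ (Fin m)) : ℝ :=
  (1 / Real.sqrt ((m : ℝ) * ((m : ℝ) - 1))) *
    (-(if i = j then (1 : ℝ) else 0) + (m : ℝ) * x i * x j / ‖x‖ ^ 2)


lemma key (m : ℕ) (x : EuclideanSpace ℝ (Fin m)) (hx : x ≠ 0) (k i j : Fin m) :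
    pd k (uMN m i j) x = (1 / Real.sqrt ((m : ℝ) * ((m : ℝ) - 1))) * (m : ℝ) / (‖x‖^2)^2 *
      (((if k = i then (1:ℝ) else 0) * x j + (if k = j then (1:ℝ) else 0) * x i) * ‖x‖^2
        - 2 * x k * x i * x j) := by
  have hne : ‖x‖^2 ≠ 0 := pow_ne_zero _ (norm_ne_zero_iff.mpr hx)
  have h1 : HasFDerivAt (fun y : EuclideanSpace ℝ (Fin m) => y i)
      (EuclideanSpace.proj (𝕜 := ℝ) i) x := (EuclideanSpace.proj (𝕜 := ℝ) i).hasFDerivAt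
  have h2 : HasFDerivAt (fun y : EuclideanSpace ℝ (Fin m) => y j)
      (EuclideanSpace.proj (𝕜 := ℝ) j) x := (EuclideanSpace.proj (𝕜 := ℝ) j).hasFDerivAt
  have hmul := h1.mul h2
  have hn : HasFDerivAt (fun y : EuclideanSpace ℝ (Fin m) => ‖y‖^2)
      (2 • (innerSL ℝ x)) x := (hasStrictFDerivAt_norm_sq x).hasFDerivAt
  have hinv : HasFDerivAt (fun y : EuclideanSpace ℝ (Fin m) => (‖y‖^2)⁻¹)
      ((-((‖x‖^2)^2)⁻¹) • (2 • (innerSL ℝ x))) x :=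
    (hasDerivAt_inv hne).comp_hasFDerivAt x hn
  have hg := hmul.mul hinv
  set c : ℝ := 1 / Real.sqrt ((m : ℝ) * ((m : ℝ) - 1)) with hc
  have hu : HasFDerivAt (uMN m i j)
      ((c * m) • ((x i * x j) • ((-((‖x‖^2)^2)⁻¹) • (2 • (innerSL ℝ x)))
        + (‖x‖^2)⁻¹ • (x i • EuclideanSpace.proj (𝕜 := ℝ) j
            + x j • EuclideanSpace.proj (𝕜 := ℝ) i))) x := by
    have heq : uMN m i j = fun y => c * (-(if i = j then (1:ℝ) else 0))
        + (c * m) * (y i * y j * (‖y‖^2)⁻¹) := by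
      funext y; simp only [uMN]; ring
    rw [heq]
    exact (hg.const_mul (c * m)).const_add _
  rw [pd, hu.fderiv]
  simp only [ContinuousLinearMap.smul_apply, ContinuousLinearMap.add_apply,
    ContinuousLinearMap.coe_smul', Pi.smul_apply, innerSL_apply_apply,
    EuclideanSpace.inner_single_right, PiLp.proj_apply,
    EuclideanSpace.single_apply, smul_eq_mul, map_one, RCLike.inner_apply, conj_trivial]
  field_simp
  ring_nf
  rw [show ((if j = k then (1:ℝ) else (0:ℝ))) = (if k = j then 1 else 0) by by_cases h : k = j <;> simp [h, eq_comm], show ((if i = k then (1:ℝ) else (0:ℝ))) = (if k = i then 1 else 0) by by_cases h : k = i <;> simp [h, eq_comm]]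

theorem stmt0 (m : ℕ) (hm : 2 ≤ m) (x : EuclideanSpace ℝ (Fin m)) (hx : x ≠ 0) :
    ∑ k : Fin m, ∑ i : Fin m, ∑ j : Fin m, (pd k (uMN m i j) x) ^ 2
      = 2 * (m : ℝ) / ‖x‖ ^ 2 := by
  have hm2 : (2:ℝ) ≤ (m:ℝ) := by exact_mod_cast hm
  have hnx : ‖x‖ ≠ 0 := norm_ne_zero_iff.mpr hx
  have hr2 : (0:ℝ) < ‖x‖^2 := by positivity
  have hsum : ∑ l : Fin m, x l ^ 2 = ‖x‖^2 := by
    rw [EuclideanSpace.norm_eq, Real.sq_sqrt (by positivity)]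
    simp [Real.norm_eq_abs, sq_abs]
  set r2 : ℝ := ‖x‖^2 with hr2def
  set C : ℝ := 1 / Real.sqrt ((m : ℝ) * ((m : ℝ) - 1)) * (m : ℝ) / r2^2 with hC
  set e : Fin m → Fin m → Fin m → ℝ := fun k i j =>
    ((if k = i then (1:ℝ) else 0) * x j + (if k = j then (1:ℝ) else 0) * x i) * r2
      - 2 * x k * x i * x j with he
  have hkey : ∀ k i j : Fin m, pd k (uMN m i j) x = C * e k i j := fun k i j => key m x hx k i j
  have step1 : ∀ k i : Fin m, ∑ j, (e k i j)^2
      = (if k = i then r2^2*(r2 - 2*x k*x i) else 0) + x i^2*r2^2 := by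
    intro k i
    set A : ℝ := (if k = i then (1:ℝ) else 0) * r2 - 2 * x k * x i with hA
    have hpt : ∀ j, (e k i j)^2
        = x j^2 * A^2 + (if k = j then 2*(x k*A)*(x i*r2) + (x i*r2)^2 else 0) := by
      intro j
      by_cases h : k = j
      · subst h; simp only [he, hA, eq_self_iff_true, if_true]; ring
      · simp only [he, hA, if_neg h]; ring
    rw [Finset.sum_congr rfl fun j _ => hpt j, Finset.sum_add_distrib, ← Finset.sum_mul, hsum]
    rw [Finset.sum_ite_eq, if_pos (Finset.mem_univ k)]
    by_cases h : k = i
    · subst h; simp only [hA, eq_self_iff_true, if_true]; ring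
    · simp only [hA, if_neg h]; ring
  have step2 : ∀ k : Fin m, ∑ i, ∑ j, (e k i j)^2 = r2^2*(r2 - 2*x k^2) + r2^3 := by
    intro k
    rw [Finset.sum_congr rfl fun i _ => step1 k i, Finset.sum_add_distrib]
    rw [Finset.sum_ite_eq, if_pos (Finset.mem_univ k), ← Finset.sum_mul, hsum]
    ring
  have step3 : ∑ k : Fin m, ∑ i : Fin m, ∑ j : Fin m, (e k i j)^2
      = 2*(m:ℝ)*r2^3 - 2*r2^3 := by
    rw [Finset.sum_congr rfl fun k _ => step2 k]
    have : ∀ k : Fin m, r2^2*(r2 - 2*x k^2) + r2^3 = 2*r2^3 - 2*r2^2*x k^2 := by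
      intro k; ring
    rw [Finset.sum_congr rfl fun k _ => this k, Finset.sum_sub_distrib, Finset.sum_const]
    have : ∑ k : Fin m, 2*r2^2*x k^2 = 2*r2^2 * ∑ k : Fin m, x k^2 := by
      rw [Finset.mul_sum]
    rw [this, hsum, Finset.card_univ, Fintype.card_fin]
    ring
  calc ∑ k : Fin m, ∑ i : Fin m, ∑ j : Fin m, (pd k (uMN m i j) x) ^ 2
      = ∑ k : Fin m, ∑ i : Fin m, ∑ j : Fin m, C^2 * (e k i j)^2 := by
        refine Finset.sum_congr rfl fun k _ => Finset.sum_congr rfl fun i _ =>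
          Finset.sum_congr rfl fun j _ => ?_
        rw [hkey]; ring
    _ = C^2 * ∑ k : Fin m, ∑ i : Fin m, ∑ j : Fin m, (e k i j)^2 := by
        simp only [← Finset.mul_sum]
    _ = C^2 * (2*(m:ℝ)*r2^3 - 2*r2^3) := by rw [step3]
    _ = 2 * (m : ℝ) / ‖x‖ ^ 2 := by
        have hsq : Real.sqrt ((m : ℝ) * ((m : ℝ) - 1)) ^ 2 = (m:ℝ) * ((m:ℝ) - 1) :=
          Real.sq_sqrt (by nlinarith)
        have hs0 : Real.sqrt ((m : ℝ) * ((m : ℝ) - 1)) ≠ 0 := by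
          intro h
          have := hsq
          rw [h] at this
          nlinarith
        have hr2ne : r2 ≠ 0 := ne_of_gt hr2
        have hm0 : (m:ℝ) ≠ 0 := ne_of_gt (by linarith)
        have hm1 : (m:ℝ) - 1 ≠ 0 := ne_of_gt (by linarith)
        have hC2 : C^2 = (m:ℝ)^2 / (((m:ℝ)*((m:ℝ)-1)) * r2^4) := by
          have h' : C^2 = 1/(Real.sqrt ((m:ℝ)*((m:ℝ)-1)))^2 * (m:ℝ)^2 / r2^4 := by
            rw [hC]; ring
          rw [h', hsq]
          rw [hr2def]
          field_simp
        rw [hC2, hr2def]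
        field_simp
end
end

section
/- Let m ≥ 2 be an integer and let u : ℝ^m ∖ {0} → ℝ^{m²} be the Misawa–Nakauchi map with components u_{ij}(x) = (1/√(m(m−1)))(−δ_{ij} + m x_i x_j / r²). Then for every x ∈ ℝ^m ∖ {0} and all indices i,j, the componentwise Euclidean Laplacian satisfies Δu_{ij}(x) = −(2m / r(x)²) u_{ij}(x). -/
noncomputable section
open EuclideanSpace Topology Filter
variable {m : ℕ}

/-- Euclidean Laplacian `Δf = Σ_k ∂²f/∂x_k²`. -/
def lap {m : ℕ} (f : EuclideanSpace ℝ (Fin m) → ℝ)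
    (x : EuclideanSpace ℝ (Fin m)) : ℝ :=
  ∑ k : Fin m, pd k (pd k f) x

abbrev E (m : ℕ) := EuclideanSpace ℝ (Fin m)

def gd {m : ℕ} (a b : Fin m) : ℝ := if a = b then 1 else 0

def Phi {m : ℕ} (i j : Fin m) (z : E m) : ℝ := z i * z j * (‖z‖^2)⁻¹

def G {m : ℕ} (i j k : Fin m) (y : E m) : ℝ :=
  (gd i k * y j + gd j k * y i) * (‖y‖^2)⁻¹ - 2 * y k * (y i * y j) * ((‖y‖^2)^2)⁻¹

lemma hasFDerivAt_coord (i : Fin m) (y : E m) :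
    HasFDerivAt (fun z : E m => z i) (EuclideanSpace.proj (𝕜 := ℝ) i) y :=
  (EuclideanSpace.proj (𝕜 := ℝ) i).hasFDerivAt

lemma hN2 {y : E m} (hy : y ≠ 0) : ‖y‖ ^ 2 ≠ 0 :=
  pow_ne_zero _ (norm_ne_zero_iff.mpr hy)

lemma hNder (y : E m) : HasFDerivAt (fun z : E m => ‖z‖ ^ 2)
    (2 • (innerSL ℝ y).comp (ContinuousLinearMap.id ℝ _)) y := (hasFDerivAt_id y).norm_sq

lemma hPhi (i j : Fin m) {y : E m} (hy : y ≠ 0) :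
    HasFDerivAt (Phi i j)
      ((y i * y j) • -((‖y‖ ^ 2) ^ 2)⁻¹ • 2 • (innerSL ℝ y).comp (ContinuousLinearMap.id ℝ (E m)) +
        (‖y‖ ^ 2)⁻¹ • (y i • EuclideanSpace.proj j + y j • EuclideanSpace.proj i)) y := by
  have h2 := (hasDerivAt_inv (hN2 hy)).comp_hasFDerivAt y (hNder y)
  simp only [Function.comp_def] at h2
  exact ((hasFDerivAt_coord i y).mul (hasFDerivAt_coord j y)).mul h2

lemma pd_Phi (i j k : Fin m) {y : E m} (hy : y ≠ 0) :
    pd k (Phi i j) y = G i j k y := by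
  show fderiv ℝ (Phi i j) y (EuclideanSpace.single k 1) = _
  rw [(hPhi i j hy).fderiv]
  simp [G, gd, ContinuousLinearMap.smul_apply, PiLp.inner_apply, EuclideanSpace.single_apply,
    mul_ite, Finset.sum_ite_eq]
  split_ifs <;> ring

lemma hG (i j k : Fin m) {y : E m} (hy : y ≠ 0) :
    HasFDerivAt (G i j k)
      (((gd i k * y j + gd j k * y i) • -((‖y‖ ^ 2) ^ 2)⁻¹ • 2 • (innerSL ℝ y).comp (ContinuousLinearMap.id ℝ (E m)) +
        (‖y‖ ^ 2)⁻¹ • ((gd i k) • EuclideanSpace.proj j + (gd j k) • EuclideanSpace.proj i))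
       - ((2 * y k * (y i * y j)) • (-(2 * ‖y‖ ^ 2) / ((‖y‖ ^ 2) ^ 2) ^ 2) • 2 • (innerSL ℝ y).comp (ContinuousLinearMap.id ℝ (E m)) +
        ((‖y‖ ^ 2) ^ 2)⁻¹ • ((2 * y k) • ((y i) • EuclideanSpace.proj j + (y j) • EuclideanSpace.proj i)
            + (y i * y j) • (2 : ℝ) • EuclideanSpace.proj k))) y := by
  have hinv : HasDerivAt (fun t : ℝ => (t ^ 2)⁻¹) (-((2:ℕ) * (‖y‖ ^ 2) ^ (2-1)) / ((‖y‖ ^ 2) ^ 2) ^ 2) (‖y‖ ^ 2) :=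
    (hasDerivAt_pow 2 _).inv (pow_ne_zero _ (hN2 hy))
  have h2 := hinv.comp_hasFDerivAt y (hNder y)
  simp only [Function.comp_def, pow_one] at h2
  have hA := (((hasFDerivAt_coord j y).const_mul (gd i k)).add
      ((hasFDerivAt_coord i y).const_mul (gd j k))).mul
      ((hasDerivAt_inv (hN2 hy)).comp_hasFDerivAt y (hNder y))
  simp only [Function.comp_def] at hA
  have hB := ((((hasFDerivAt_coord k y).const_mul (2:ℝ)).mul
      ((hasFDerivAt_coord i y).mul (hasFDerivAt_coord j y))).mul h2)
  have := hA.sub hB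
  convert this using 1
  ext v
  simp [ContinuousLinearMap.smul_apply]
  try ring
  all_goals first | rfl | (ext v; simp [ContinuousLinearMap.smul_apply]; try ring)

lemma pd_G (i j k : Fin m) {y : E m} (hy : y ≠ 0) :
    pd k (G i j k) y =
      2 * gd i k * gd j k * (‖y‖^2)⁻¹
      - (4 * y k * (gd i k * y j + gd j k * y i) + 2 * (y i * y j)) * ((‖y‖^2)^2)⁻¹
      + 8 * (y k)^2 * (y i * y j) * ((‖y‖^2)^3)⁻¹ := by
  show fderiv ℝ (G i j k) y (EuclideanSpace.single k 1) = _
  rw [(hG i j k hy).fderiv]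
  have h4 : (‖y‖ ^ 2) ≠ 0 := hN2 hy
  simp [gd, ContinuousLinearMap.smul_apply, PiLp.inner_apply, EuclideanSpace.single_apply,
    mul_ite, Finset.sum_ite_eq]
  split_ifs with h1 h2 <;> simp_all only [ContinuousLinearMap.smul_apply, ContinuousLinearMap.zero_apply,
    PiLp.proj_apply, EuclideanSpace.single_apply, smul_eq_mul, ↓reduceIte, mul_one, mul_zero,
    add_zero, if_true, if_false, not_false_eq_true] <;> first | (field_simp [h1, h2]; ring) | (field_simp [h1]; ring) 

lemma sum_gd_mul (i : Fin m) (f : Fin m → ℝ) : ∑ k, gd i k * f k = f i := by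
  simp [gd, ite_mul, Finset.sum_ite_eq]

lemma norm_sq_eq_sum (x : E m) : ∑ k, (x k)^2 = ‖x‖^2 := by
  rw [EuclideanSpace.norm_eq, Real.sq_sqrt (by positivity)]
  simp [sq_abs]


theorem stmt1 (m : ℕ) (hm : 2 ≤ m) (x : EuclideanSpace ℝ (Fin m)) (hx : x ≠ 0)
    (i j : Fin m) :
    lap (uMN m i j) x = -(2 * (m : ℝ) / ‖x‖ ^ 2) * uMN m i j x := by
  set C : ℝ := 1 / Real.sqrt ((m : ℝ) * ((m : ℝ) - 1)) with hC
  have hfun : uMN m i j = fun z => C * (-(if i = j then (1:ℝ) else 0)) + (C * m) * Phi i j z := by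
    funext z; simp only [uMN, Phi, hC]; ring
  have pd_u : ∀ (k : Fin m) (y : E m), y ≠ 0 → pd k (uMN m i j) y = (C * m) * G i j k y := by
    intro k y hy
    have hd := ((hPhi i j hy).const_mul (C * m)).const_add (C * (-(if i = j then (1:ℝ) else 0)))
    rw [hfun]
    show fderiv ℝ _ y (EuclideanSpace.single k 1) = _
    rw [hd.fderiv, ContinuousLinearMap.smul_apply]
    have := pd_Phi i j k hy
    rw [pd, (hPhi i j hy).fderiv] at this
    rw [this, smul_eq_mul]
  have hsecond : ∀ k : Fin m, pd k (pd k (uMN m i j)) x = (C * m) * pd k (G i j k) x := by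
    intro k
    have h0 : ∀ᶠ y in 𝓝 x, y ≠ 0 := eventually_ne_nhds hx
    have hev : pd k (uMN m i j) =ᶠ[𝓝 x] fun y => (C * m) * G i j k y :=
      h0.mono fun y hy => pd_u k y hy
    show fderiv ℝ _ x (EuclideanSpace.single k 1) = _
    rw [hev.fderiv_eq, ((hG i j k hx).const_mul (C * m)).fderiv, ContinuousLinearMap.smul_apply,
      smul_eq_mul, pd, (hG i j k hx).fderiv]
  have hNx : ‖x‖ ^ 2 ≠ 0 := hN2 hx
  have hlap : lap (uMN m i j) x = ∑ k, (C * m) * pd k (G i j k) x :=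
    Finset.sum_congr rfl fun k _ => hsecond k
  rw [hlap]
  have hterm : ∀ k : Fin m, (C * m) * pd k (G i j k) x =
      (C * m) * 2 * (‖x‖^2)⁻¹ * (gd i k * gd j k)
      - (C * m) * 4 * ((‖x‖^2)^2)⁻¹ * x j * (gd i k * x k)
      - (C * m) * 4 * ((‖x‖^2)^2)⁻¹ * x i * (gd j k * x k)
      - (C * m) * 2 * (x i * x j) * ((‖x‖^2)^2)⁻¹
      + (C * m) * 8 * (x i * x j) * ((‖x‖^2)^3)⁻¹ * (x k)^2 := by
    intro k
    rw [pd_G i j k hx]; ring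
  rw [Finset.sum_congr rfl fun k _ => hterm k]
  have e1 : ∑ k, gd i k * gd j k = gd i j := by
    rw [sum_gd_mul]; simp [gd, eq_comm]
  simp only [Finset.sum_add_distrib, Finset.sum_sub_distrib, ← Finset.mul_sum, e1,
    sum_gd_mul, norm_sq_eq_sum, Finset.sum_const, Finset.card_univ, Fintype.card_fin,
    nsmul_eq_mul]
  simp only [uMN, gd, ← hC]
  field_simp
  split_ifs <;> ring
end
end

section
/- Let m ≥ 2 be an integer and let u : ℝ^m ∖ {0} → ℝ^{m²} be the Misawa–Nakauchi map with components u_{ij}(x) = (1/√(m(m−1)))(−δ_{ij} + m x_i x_j / r²). Then for every x ∈ ℝ^m ∖ {0} and all indices i,j, the componentwise Euclidean bi-Laplacian satisfies Δ²u_{ij}(x) = (8m(m−2) / r(x)⁴) u_{ij}(x). -/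
noncomputable section

namespace MNaux

variable {m : ℕ}
local notation "E" => EuclideanSpace ℝ (Fin m)

def dd {m : ℕ} (a b : Fin m) : ℝ := if a = b then 1 else 0

lemma hcoord (l : Fin m) (x : E) :
    HasFDerivAt (fun y : E => y l) (EuclideanSpace.proj l : E →L[ℝ] ℝ) x :=
  (EuclideanSpace.proj l : E →L[ℝ] ℝ).hasFDerivAt

lemma hnsq (x : E) : HasFDerivAt (fun y : E => ‖y‖^2) (2 • (innerSL ℝ x)) x :=
  (hasStrictFDerivAt_norm_sq x).hasFDerivAt

lemma nsq_ne {x : E} (hx : x ≠ 0) : ‖x‖^2 ≠ 0 :=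
  pow_ne_zero 2 (norm_ne_zero_iff.mpr hx)

lemma fd_inv {f : E → ℝ} {f' : E →L[ℝ] ℝ} {x : E} (hf : HasFDerivAt f f' x) (h : f x ≠ 0) :
    HasFDerivAt (fun y => (f y)⁻¹) ((-((f x)^2)⁻¹) • f') x := by
  exact (hasDerivAt_inv h).comp_hasFDerivAt x hf

/-- The four shapes of functions appearing in the computation. -/
def Fm1 (a b : ℝ) (i j : Fin m) : E → ℝ :=
  fun y => a + b * (y i * y j) * (‖y‖^2)⁻¹

def Fm2 (a b c : ℝ) (i j k : Fin m) : E → ℝ :=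
  fun y => (a * y j + b * y i) * (‖y‖^2)⁻¹
    + c * (y k * (y i * y j)) * ((‖y‖^2)⁻¹ * (‖y‖^2)⁻¹)

def Fm3 (a b : ℝ) (i j : Fin m) : E → ℝ :=
  fun y => a * (‖y‖^2)⁻¹ + b * (y i * y j) * ((‖y‖^2)⁻¹ * (‖y‖^2)⁻¹)

def Fm4 (a b c e : ℝ) (i j k : Fin m) : E → ℝ :=
  fun y => a * y k * ((‖y‖^2)⁻¹ * (‖y‖^2)⁻¹)
    + (b * y j + c * y i) * ((‖y‖^2)⁻¹ * (‖y‖^2)⁻¹)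
    + e * (y k * (y i * y j)) * ((‖y‖^2)⁻¹ * (‖y‖^2)⁻¹ * (‖y‖^2)⁻¹)

set_option maxHeartbeats 1000000 in
lemma P1 (a b : ℝ) (i j k : Fin m) (x : E) (hx : x ≠ 0) :
    pd k (Fm1 a b i j) x = Fm2 (b * dd k i) (b * dd k j) (-2*b) i j k x := by
  have hq := nsq_ne hx
  have h : HasFDerivAt (Fm1 a b i j) _ x :=
    ((((hcoord i x).mul (hcoord j x)).const_mul b).mul (fd_inv (hnsq x) hq)).const_add a
  rw [pd, h.fderiv]
  clear h
  unfold Fm2 dd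
  simp only [ContinuousLinearMap.add_apply, ContinuousLinearMap.smul_apply,
    ContinuousLinearMap.coe_smul', Pi.smul_apply, ContinuousLinearMap.neg_apply,
    innerSL_apply_apply, EuclideanSpace.inner_single_right, RCLike.inner_apply, smul_eq_mul,
    EuclideanSpace.single_apply, PiLp.proj_apply, Pi.mul_apply, Pi.add_apply, Pi.pow_apply,
    conj_trivial]
  rcases eq_or_ne k i with rfl | h1 <;> rcases eq_or_ne k j with rfl | h2 <;>
    (try simp only [eq_self_iff_true, if_true]) <;>
    (try simp only [if_neg h1, if_neg (Ne.symm h1)]) <;>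
    (try simp only [if_neg h2, if_neg (Ne.symm h2)]) <;> field_simp <;>
    (try simp only [if_neg h1, if_neg (Ne.symm h1)]) <;>
    (try simp only [if_neg h2, if_neg (Ne.symm h2)]) <;> ring

set_option maxHeartbeats 1000000 in
lemma P2 (a b c : ℝ) (i j k : Fin m) (x : E) (hx : x ≠ 0) :
    pd k (Fm2 a b c i j k) x
      = (a * dd k j + b * dd k i) * (‖x‖^2)⁻¹
        + (-2) * x k * (a * x j + b * x i) * ((‖x‖^2)⁻¹)^2
        + c * (x i * x j + x k * (dd k i * x j + dd k j * x i)) * ((‖x‖^2)⁻¹)^2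
        + (-4*c) * ((x k)^2 * (x i * x j)) * ((‖x‖^2)⁻¹)^3 := by
  have hq := nsq_ne hx
  have hQi := fd_inv (hnsq x) hq
  have h : HasFDerivAt (Fm2 a b c i j k) _ x :=
    ((((hcoord j x).const_mul a).add ((hcoord i x).const_mul b)).mul hQi).add
      ((((hcoord k x).mul ((hcoord i x).mul (hcoord j x))).const_mul c).mul (hQi.mul hQi))
  rw [pd, h.fderiv]
  clear h hQi
  unfold dd
  simp only [ContinuousLinearMap.add_apply, ContinuousLinearMap.smul_apply,
    ContinuousLinearMap.coe_smul', Pi.smul_apply, ContinuousLinearMap.neg_apply,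
    innerSL_apply_apply, EuclideanSpace.inner_single_right, RCLike.inner_apply, smul_eq_mul,
    EuclideanSpace.single_apply, PiLp.proj_apply, Pi.mul_apply, Pi.add_apply, Pi.pow_apply,
    conj_trivial]
  rcases eq_or_ne k i with rfl | h1 <;> rcases eq_or_ne k j with rfl | h2 <;>
    (try simp only [eq_self_iff_true, if_true]) <;>
    (try simp only [if_neg h1, if_neg (Ne.symm h1)]) <;>
    (try simp only [if_neg h2, if_neg (Ne.symm h2)]) <;> field_simp <;>
    (try simp only [if_neg h1, if_neg (Ne.symm h1)]) <;>
    (try simp only [if_neg h2, if_neg (Ne.symm h2)]) <;> ring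

set_option maxHeartbeats 1000000 in
lemma P3 (a b : ℝ) (i j k : Fin m) (x : E) (hx : x ≠ 0) :
    pd k (Fm3 a b i j) x = Fm4 (-2*a) (b * dd k i) (b * dd k j) (-4*b) i j k x := by
  have hq := nsq_ne hx
  have hQi := fd_inv (hnsq x) hq
  have h : HasFDerivAt (Fm3 a b i j) _ x :=
    (hQi.const_mul a).add
      ((((hcoord i x).mul (hcoord j x)).const_mul b).mul (hQi.mul hQi))
  rw [pd, h.fderiv]
  clear h hQi
  unfold Fm4 dd
  simp only [ContinuousLinearMap.add_apply, ContinuousLinearMap.smul_apply,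
    ContinuousLinearMap.coe_smul', Pi.smul_apply, ContinuousLinearMap.neg_apply,
    innerSL_apply_apply, EuclideanSpace.inner_single_right, RCLike.inner_apply, smul_eq_mul,
    EuclideanSpace.single_apply, PiLp.proj_apply, Pi.mul_apply, Pi.add_apply, Pi.pow_apply,
    conj_trivial]
  rcases eq_or_ne k i with rfl | h1 <;> rcases eq_or_ne k j with rfl | h2 <;>
    (try simp only [eq_self_iff_true, if_true]) <;>
    (try simp only [if_neg h1, if_neg (Ne.symm h1)]) <;>
    (try simp only [if_neg h2, if_neg (Ne.symm h2)]) <;> field_simp <;>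
    (try simp only [if_neg h1, if_neg (Ne.symm h1)]) <;>
    (try simp only [if_neg h2, if_neg (Ne.symm h2)]) <;> ring

set_option maxHeartbeats 1000000 in
lemma P4 (a b c e : ℝ) (i j k : Fin m) (x : E) (hx : x ≠ 0) :
    pd k (Fm4 a b c e i j k) x
      = a * ((‖x‖^2)⁻¹)^2 + (-4*a) * (x k)^2 * ((‖x‖^2)⁻¹)^3
        + (b * dd k j + c * dd k i) * ((‖x‖^2)⁻¹)^2
        + (-4) * x k * (b * x j + c * x i) * ((‖x‖^2)⁻¹)^3
        + e * (x i * x j + x k * (dd k i * x j + dd k j * x i)) * ((‖x‖^2)⁻¹)^3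
        + (-6*e) * ((x k)^2 * (x i * x j)) * ((‖x‖^2)⁻¹)^4 := by
  have hq := nsq_ne hx
  have hQi := fd_inv (hnsq x) hq
  have h : HasFDerivAt (Fm4 a b c e i j k) _ x :=
    ((((hcoord k x).const_mul a).mul (hQi.mul hQi)).add
      ((((hcoord j x).const_mul b).add ((hcoord i x).const_mul c)).mul (hQi.mul hQi))).add
      ((((hcoord k x).mul ((hcoord i x).mul (hcoord j x))).const_mul e).mul
        ((hQi.mul hQi).mul hQi))
  rw [pd, h.fderiv]
  clear h hQi
  unfold dd
  simp only [ContinuousLinearMap.add_apply, ContinuousLinearMap.smul_apply,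
    ContinuousLinearMap.coe_smul', Pi.smul_apply, ContinuousLinearMap.neg_apply,
    innerSL_apply_apply, EuclideanSpace.inner_single_right, RCLike.inner_apply, smul_eq_mul,
    EuclideanSpace.single_apply, PiLp.proj_apply, Pi.mul_apply, Pi.add_apply, Pi.pow_apply,
    conj_trivial]
  rcases eq_or_ne k i with rfl | h1 <;> rcases eq_or_ne k j with rfl | h2 <;>
    (try simp only [eq_self_iff_true, if_true]) <;>
    (try simp only [if_neg h1, if_neg (Ne.symm h1)]) <;>
    (try simp only [if_neg h2, if_neg (Ne.symm h2)]) <;> field_simp <;>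
    (try simp only [if_neg h1, if_neg (Ne.symm h1)]) <;>
    (try simp only [if_neg h2, if_neg (Ne.symm h2)]) <;> ring

lemma pd_congr {f g : E → ℝ} {x : E} (k : Fin m) (h : f =ᶠ[nhds x] g) :
    pd k f x = pd k g x := by
  unfold pd; rw [h.fderiv_eq]

lemma ev_ne {x : E} (hx : x ≠ 0) : ∀ᶠ y in nhds x, y ≠ 0 := eventually_ne_nhds hx

lemma pd2_congr {f g : E → ℝ} {x : E} (k : Fin m)
    (hfg : ∀ y : E, y ≠ 0 → f y = g y) (hx : x ≠ 0) :
    pd k (pd k f) x = pd k (pd k g) x := by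
  refine pd_congr k ?_
  filter_upwards [ev_ne hx] with y hy
  exact pd_congr k ((ev_ne hy).mono fun z hz => hfg z hz)

lemma lap_congr {f g : E → ℝ} {x : E}
    (hfg : ∀ y : E, y ≠ 0 → f y = g y) (hx : x ≠ 0) :
    lap f x = lap g x :=
  Finset.sum_congr rfl fun k _ => pd2_congr k hfg hx

lemma sum_dd (i j : Fin m) : ∑ k : Fin m, dd k i * dd k j = dd i j := by
  unfold dd
  simp [ite_mul, Finset.sum_ite_eq', eq_comm]

lemma sum_x_dd (x : E) (l : Fin m) : ∑ k : Fin m, x k * dd k l = x l := by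
  unfold dd
  simp [mul_ite, Finset.sum_ite_eq']

lemma sum_sq (x : E) : ∑ k : Fin m, (x k)^2 = ‖x‖^2 := by
  rw [EuclideanSpace.norm_eq, Real.sq_sqrt (Finset.sum_nonneg fun _ _ => sq_nonneg _)]
  simp [sq_abs]

lemma sum_c (c : ℝ) : ∑ _k : Fin m, c = (m : ℝ) * c := by
  simp [Finset.sum_const, Finset.card_univ, nsmul_eq_mul]

set_option maxHeartbeats 1000000 in
lemma LapA (a b : ℝ) (i j : Fin m) (x : E) (hx : x ≠ 0) :
    lap (Fm1 a b i j) x = Fm3 (2*b*dd i j) (-(2*(m:ℝ))*b) i j x := by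
  have hq := nsq_ne hx
  have step : ∀ k : Fin m, pd k (pd k (Fm1 a b i j)) x
      = (2*b*(‖x‖^2)⁻¹) * (dd k i * dd k j)
        + (-4*b*(x j)*((‖x‖^2)⁻¹)^2) * (x k * dd k i)
        + (-4*b*(x i)*((‖x‖^2)⁻¹)^2) * (x k * dd k j)
        + (-2*b*(x i * x j)*((‖x‖^2)⁻¹)^2)
        + (8*b*(x i * x j)*((‖x‖^2)⁻¹)^3) * (x k)^2 := by
    intro k
    rw [pd_congr k ((ev_ne hx).mono fun y hy => P1 a b i j k y hy),
      P2 (b * dd k i) (b * dd k j) (-2*b) i j k x hx]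
    ring
  rw [lap, Finset.sum_congr rfl fun k _ => step k]
  rw [Finset.sum_add_distrib, Finset.sum_add_distrib, Finset.sum_add_distrib,
    Finset.sum_add_distrib]
  rw [show (∑ k : Fin m, (2*b*(‖x‖^2)⁻¹) * (dd k i * dd k j))
      = (2*b*(‖x‖^2)⁻¹) * dd i j by rw [← Finset.mul_sum, sum_dd]]
  rw [show (∑ k : Fin m, (-4*b*(x j)*((‖x‖^2)⁻¹)^2) * (x k * dd k i))
      = (-4*b*(x j)*((‖x‖^2)⁻¹)^2) * x i by rw [← Finset.mul_sum, sum_x_dd]]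
  rw [show (∑ k : Fin m, (-4*b*(x i)*((‖x‖^2)⁻¹)^2) * (x k * dd k j))
      = (-4*b*(x i)*((‖x‖^2)⁻¹)^2) * x j by rw [← Finset.mul_sum, sum_x_dd]]
  rw [show (∑ k : Fin m, (8*b*(x i * x j)*((‖x‖^2)⁻¹)^3) * (x k)^2)
      = (8*b*(x i * x j)*((‖x‖^2)⁻¹)^3) * ‖x‖^2 by rw [← Finset.mul_sum, sum_sq]]
  rw [sum_c]
  unfold Fm3
  field_simp
  ring

set_option maxHeartbeats 1000000 in
lemma LapB (a b : ℝ) (i j : Fin m) (x : E) (hx : x ≠ 0) :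
    lap (Fm3 a b i j) x
      = (a*(8-2*(m:ℝ)) + 2*b*dd i j) * ((‖x‖^2)⁻¹)^2
        + ((8-4*(m:ℝ))*b) * (x i * x j) * ((‖x‖^2)⁻¹)^3 := by
  have hq := nsq_ne hx
  have step : ∀ k : Fin m, pd k (pd k (Fm3 a b i j)) x
      = (2*b*((‖x‖^2)⁻¹)^2) * (dd k i * dd k j)
        + (-8*b*(x j)*((‖x‖^2)⁻¹)^3) * (x k * dd k i)
        + (-8*b*(x i)*((‖x‖^2)⁻¹)^3) * (x k * dd k j)
        + (-2*a*((‖x‖^2)⁻¹)^2 + -4*b*(x i * x j)*((‖x‖^2)⁻¹)^3)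
        + (8*a*((‖x‖^2)⁻¹)^3 + 24*b*(x i * x j)*((‖x‖^2)⁻¹)^4) * (x k)^2 := by
    intro k
    rw [pd_congr k ((ev_ne hx).mono fun y hy => P3 a b i j k y hy),
      P4 (-2*a) (b * dd k i) (b * dd k j) (-4*b) i j k x hx]
    ring
  rw [lap, Finset.sum_congr rfl fun k _ => step k]
  rw [Finset.sum_add_distrib, Finset.sum_add_distrib, Finset.sum_add_distrib,
    Finset.sum_add_distrib]
  rw [show (∑ k : Fin m, (2*b*((‖x‖^2)⁻¹)^2) * (dd k i * dd k j))
      = (2*b*((‖x‖^2)⁻¹)^2) * dd i j by rw [← Finset.mul_sum, sum_dd]]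
  rw [show (∑ k : Fin m, (-8*b*(x j)*((‖x‖^2)⁻¹)^3) * (x k * dd k i))
      = (-8*b*(x j)*((‖x‖^2)⁻¹)^3) * x i by rw [← Finset.mul_sum, sum_x_dd]]
  rw [show (∑ k : Fin m, (-8*b*(x i)*((‖x‖^2)⁻¹)^3) * (x k * dd k j))
      = (-8*b*(x i)*((‖x‖^2)⁻¹)^3) * x j by rw [← Finset.mul_sum, sum_x_dd]]
  rw [show (∑ k : Fin m, (8*a*((‖x‖^2)⁻¹)^3 + 24*b*(x i * x j)*((‖x‖^2)⁻¹)^4) * (x k)^2)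
      = (8*a*((‖x‖^2)⁻¹)^3 + 24*b*(x i * x j)*((‖x‖^2)⁻¹)^4) * ‖x‖^2 by
        rw [← Finset.mul_sum, sum_sq]]
  rw [sum_c]
  field_simp
  ring

end MNaux

open MNaux in
theorem stmt2 (m : ℕ) (hm : 2 ≤ m) (x : EuclideanSpace ℝ (Fin m)) (hx : x ≠ 0)
    (i j : Fin m) :
    lap (lap (uMN m i j)) x
      = (8 * (m : ℝ) * ((m : ℝ) - 2) / ‖x‖ ^ 4) * uMN m i j x := by
  set C : ℝ := 1 / Real.sqrt ((m : ℝ) * ((m : ℝ) - 1)) with hC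
  have hu : uMN m i j = Fm1 (C * (-(if i = j then (1:ℝ) else 0))) (C * m) i j := by
    funext y
    unfold uMN Fm1
    rw [← hC]
    ring
  have hq := nsq_ne hx
  rw [hu, lap_congr (fun y hy => LapA (C * (-(if i = j then (1:ℝ) else 0))) (C * m) i j y hy) hx,
    LapB _ _ i j x hx]
  unfold Fm1 dd
  ring
end
end

section
/- Let m ≥ 2 be an integer and let u : ℝ^m ∖ {0} → ℝ^{m²} be the Misawa–Nakauchi map with components u_{ij}(x) = (1/√(m(m−1)))(−δ_{ij} + m x_i x_j / r²). Then u is a harmonic map into the sphere, i.e. for every x ∈ ℝ^m ∖ {0} it satisfies Δu(x) + |∇u(x)|² u(x) = 0 (componentwise), where |∇u|² = Σ_{k,i,j} (∂_k u_{ij})². -/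
noncomputable section

def GMN (m : ℕ) (k i j : Fin m) (y : EuclideanSpace ℝ (Fin m)) : ℝ :=
  ((if k = i then y j else 0) + (if k = j then y i else 0)) * (‖y‖^2)⁻¹
    - 2 * (y k * y i * y j) * ((‖y‖^2)^2)⁻¹

variable {m : ℕ}
local notation "E" => EuclideanSpace ℝ (Fin m)

lemma pd_uMN (k i j : Fin m) (y : E) (hy : y ≠ 0) :
    pd k (uMN m i j) y
      = (1 / Real.sqrt ((m : ℝ) * ((m : ℝ) - 1))) * m * GMN m k i j y := by
  have hQ0 : ‖y‖^2 ≠ 0 := pow_ne_zero _ (norm_ne_zero_iff.2 hy)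
  set c0 : ℝ := 1 / Real.sqrt ((m : ℝ) * ((m : ℝ) - 1)) with hc0
  have hQ : HasFDerivAt (fun z : E => ‖z‖^2) (2 • (innerSL ℝ y)) y :=
    (hasStrictFDerivAt_norm_sq y).hasFDerivAt
  have hInv : HasFDerivAt (fun z : E => (‖z‖^2)⁻¹)
      ((-((‖y‖^2)^2)⁻¹) • (2 • (innerSL ℝ y))) y :=
    (hasDerivAt_inv hQ0).comp_hasFDerivAt y hQ
  have hP : HasFDerivAt (fun z : E => z i * z j)
      (y i • EuclideanSpace.proj (𝕜 := ℝ) j + y j • EuclideanSpace.proj (𝕜 := ℝ) i) y :=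
    ((EuclideanSpace.proj (𝕜 := ℝ) i).hasFDerivAt).mul
      ((EuclideanSpace.proj (𝕜 := ℝ) j).hasFDerivAt)
  have hF := hP.mul hInv
  have huMN : uMN m i j = fun z : E =>
      c0 * (-(if i = j then (1:ℝ) else 0)) + (c0 * m) * ((z i * z j) * (‖z‖^2)⁻¹) := by
    funext z; simp only [uMN, hc0]; ring
  have hU : HasFDerivAt (uMN m i j)
      ((c0 * m) • ((y i * y j) • ((-((‖y‖^2)^2)⁻¹) • (2 • (innerSL ℝ y)))
        + (‖y‖^2)⁻¹ • (y i • EuclideanSpace.proj (𝕜 := ℝ) j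
            + y j • EuclideanSpace.proj (𝕜 := ℝ) i))) y := by
    rw [huMN]
    exact (hF.const_mul (c0 * m)).const_add _
  rw [pd, hU.fderiv]
  simp only [ContinuousLinearMap.coe_smul', Pi.smul_apply, ContinuousLinearMap.add_apply,
    ContinuousLinearMap.smul_apply, smul_eq_mul, EuclideanSpace.inner_single_right,
    innerSL_apply_apply, real_inner_comm]
  simp only [RCLike.conj_to_real, PiLp.proj_apply, EuclideanSpace.single_apply,
    smul_eq_mul, one_mul, GMN]
  by_cases hki : k = i <;> by_cases hkj : k = j
  · have hij : i = j := hki.symm.trans hkj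
    subst hki; subst hij
    simp only [if_pos rfl, if_true]
    field_simp; ring
  · subst hki
    simp only [if_pos rfl, if_true, if_neg hkj, if_neg (fun h : j = k => hkj h.symm)]
    field_simp; ring
  · subst hkj
    simp only [if_pos rfl, if_true, if_neg hki, if_neg (fun h : i = k => hki h.symm)]
    field_simp; ring
  · simp only [if_neg hki, if_neg hkj, if_neg (fun h : i = k => hki h.symm),
      if_neg (fun h : j = k => hkj h.symm)]
    ring

set_option maxHeartbeats 1000000 in
lemma pd_pd_uMN (k i j : Fin m) (x : E) (hx : x ≠ 0) :
    pd k (pd k (uMN m i j)) x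
      = (1 / Real.sqrt ((m : ℝ) * ((m : ℝ) - 1))) * m *
        (2 * (if k = i then (1:ℝ) else 0) * (if k = j then (1:ℝ) else 0) * (‖x‖^2)⁻¹
          - 4 * x k * ((if k = i then x j else 0) + (if k = j then x i else 0)) * ((‖x‖^2)⁻¹)^2
          - 2 * x i * x j * ((‖x‖^2)⁻¹)^2
          + 8 * x k^2 * x i * x j * ((‖x‖^2)⁻¹)^3) := by
  have hQ0 : ‖x‖^2 ≠ 0 := pow_ne_zero _ (norm_ne_zero_iff.2 hx)
  set c0 : ℝ := 1 / Real.sqrt ((m : ℝ) * ((m : ℝ) - 1)) with hc0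
  set d1 : ℝ := if k = i then (1:ℝ) else 0 with hd1
  set d2 : ℝ := if k = j then (1:ℝ) else 0 with hd2
  -- step 1: replace inner function by explicit formula near x
  have hev : ∀ᶠ y in nhds x, y ≠ (0 : E) :=
    (isOpen_compl_singleton).eventually_mem (by simpa using hx)
  have hfeq : pd k (uMN m i j) =ᶠ[nhds x]
      (fun y => (c0 * m) * ((d1 * y j + d2 * y i) * (‖y‖^2)⁻¹
        - 2 * ((y k * y i * y j) * ((‖y‖^2)⁻¹ * (‖y‖^2)⁻¹)))) := by
    filter_upwards [hev] with y hy
    rw [pd_uMN k i j y hy, GMN]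
    have : ((‖y‖^2)^2)⁻¹ = (‖y‖^2)⁻¹ * (‖y‖^2)⁻¹ := by
      rw [sq, mul_inv]
    rw [this, hd1, hd2]
    split_ifs <;> ring
  have hstep : pd k (pd k (uMN m i j)) x
      = pd k (fun y => (c0 * m) * ((d1 * y j + d2 * y i) * (‖y‖^2)⁻¹
        - 2 * ((y k * y i * y j) * ((‖y‖^2)⁻¹ * (‖y‖^2)⁻¹)))) x := by
    show fderiv ℝ (pd k (uMN m i j)) x (EuclideanSpace.single k 1) = _
    rw [Filter.EventuallyEq.fderiv_eq hfeq]; rfl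
  rw [hstep]
  -- step 2: differentiate the explicit formula
  have hQ : HasFDerivAt (fun z : E => ‖z‖^2) (2 • (innerSL ℝ x)) x :=
    (hasStrictFDerivAt_norm_sq x).hasFDerivAt
  have hI : HasFDerivAt (fun z : E => (‖z‖^2)⁻¹)
      ((-((‖x‖^2)^2)⁻¹) • (2 • (innerSL ℝ x))) x :=
    (hasDerivAt_inv hQ0).comp_hasFDerivAt x hQ
  have hA : HasFDerivAt (fun z : E => d1 * z j + d2 * z i)
      (d1 • EuclideanSpace.proj (𝕜 := ℝ) j + d2 • EuclideanSpace.proj (𝕜 := ℝ) i) x :=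
    (((EuclideanSpace.proj (𝕜 := ℝ) j).hasFDerivAt).const_mul d1).add
      (((EuclideanSpace.proj (𝕜 := ℝ) i).hasFDerivAt).const_mul d2)
  have hP : HasFDerivAt (fun z : E => z k * z i * z j)
      ((x k * x i) • EuclideanSpace.proj (𝕜 := ℝ) j +
        x j • (x k • EuclideanSpace.proj (𝕜 := ℝ) i + x i • EuclideanSpace.proj (𝕜 := ℝ) k)) x :=
    (((EuclideanSpace.proj (𝕜 := ℝ) k).hasFDerivAt).mul
      ((EuclideanSpace.proj (𝕜 := ℝ) i).hasFDerivAt)).mul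
      ((EuclideanSpace.proj (𝕜 := ℝ) j).hasFDerivAt)
  have hW := (((hA.mul hI).sub ((hP.mul (hI.mul hI)).const_mul 2)).const_mul (c0 * m))
  have hW' : HasFDerivAt (fun y : E => (c0 * m) * ((d1 * y j + d2 * y i) * (‖y‖^2)⁻¹
        - 2 * ((y k * y i * y j) * ((‖y‖^2)⁻¹ * (‖y‖^2)⁻¹)))) _ x := hW
  rw [pd, hW'.fderiv]
  simp only [ContinuousLinearMap.coe_smul', Pi.smul_apply, ContinuousLinearMap.add_apply,
    ContinuousLinearMap.sub_apply, ContinuousLinearMap.coe_sub', Pi.sub_apply,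
    ContinuousLinearMap.smul_apply, smul_eq_mul, EuclideanSpace.inner_single_right,
    innerSL_apply_apply, real_inner_comm, RCLike.conj_to_real, PiLp.proj_apply,
    EuclideanSpace.single_apply, one_mul, Pi.mul_apply]
  by_cases hki : k = i <;> by_cases hkj : k = j
  · have hij : i = j := hki.symm.trans hkj
    subst hki; subst hij
    simp only [hd1, hd2, if_pos rfl, if_true]
    field_simp; ring
  · subst hki
    simp only [hd1, hd2, if_pos rfl, if_true, if_neg hkj, if_neg (fun h : j = k => hkj h.symm)]
    field_simp; ring
  · subst hkj
    simp only [hd1, hd2, if_pos rfl, if_true, if_neg hki, if_neg (fun h : i = k => hki h.symm)]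
    field_simp; ring
  · simp only [hd1, hd2, if_neg hki, if_neg hkj, if_neg (fun h : i = k => hki h.symm),
      if_neg (fun h : j = k => hkj h.symm), if_true]
    field_simp; ring

lemma sum_split (f g : Fin m → ℝ) (k : Fin m) (h : ∀ b, b ≠ k → f b = g b) :
    ∑ b, f b = (∑ b, g b) + (f k - g k) := by
  have hb : ∀ b, f b = g b + (if b = k then f k - g k else 0) := by
    intro b
    by_cases hbk : b = k
    · subst hbk; simp
    · simp [hbk, h b hbk]
  rw [Finset.sum_congr rfl fun b _ => hb b, Finset.sum_add_distrib,
    Finset.sum_ite_eq' Finset.univ k (fun _ => f k - g k)]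
  simp

lemma norm_sq_sum (x : E) : ∑ l, x l ^ 2 = ‖x‖ ^ 2 := by
  rw [EuclideanSpace.norm_eq, Real.sq_sqrt (by positivity)]
  congr 1; funext l; rw [Real.norm_eq_abs, sq_abs]

lemma lap_sum (X : Fin m → ℝ) (q : ℝ) (i j : Fin m) (hq : ∑ l, X l ^ 2 = q)
    (hq0 : q ≠ 0) :
    ∑ k : Fin m, (2 * (if k = i then (1:ℝ) else 0) * (if k = j then (1:ℝ) else 0) * q⁻¹
      - 4 * X k * ((if k = i then X j else 0) + (if k = j then X i else 0)) * (q⁻¹)^2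
      - 2 * X i * X j * (q⁻¹)^2 + 8 * (X k)^2 * X i * X j * (q⁻¹)^3)
    = 2 * (if i = j then (1:ℝ) else 0) * q⁻¹ - 2 * m * X i * X j * (q⁻¹)^2 := by
  have hcard : (Finset.univ : Finset (Fin m)).card = m := by simp
  by_cases hij : i = j
  · subst hij
    rw [sum_split _ (fun k => -2 * X i * X i * (q⁻¹)^2 + (X k)^2 * (8 * X i * X i * (q⁻¹)^3)) i
      (by
        intro b hb
        simp only [if_neg hb]
        all_goals ring)]
    rw [Finset.sum_add_distrib, Finset.sum_const, ← Finset.sum_mul, hq, hcard]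
    simp only [if_pos rfl, if_true, nsmul_eq_mul]
    field_simp
    ring
  · rw [sum_split _ (fun k => 2 * (0:ℝ) * (if k = j then (1:ℝ) else 0) * q⁻¹
        - 4 * X k * ((0:ℝ) + (if k = j then X i else 0)) * (q⁻¹)^2
        - 2 * X i * X j * (q⁻¹)^2 + 8 * (X k)^2 * X i * X j * (q⁻¹)^3) i
      (by
        intro b hb
        simp only [if_neg hb]
        all_goals ring)]
    rw [sum_split _ (fun k => -2 * X i * X j * (q⁻¹)^2 + (X k)^2 * (8 * X i * X j * (q⁻¹)^3)) j
      (by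
        intro b hb
        simp only [if_neg hb]
        all_goals ring)]
    rw [Finset.sum_add_distrib, Finset.sum_const, ← Finset.sum_mul, hq, hcard]
    simp only [if_pos rfl, if_true, if_neg hij, if_neg (fun h : j = i => hij h.symm), nsmul_eq_mul]
    field_simp
    ring

lemma triple_sum (X : Fin m → ℝ) (q : ℝ) (hq : ∑ l, X l ^ 2 = q) (hq0 : q ≠ 0) :
    ∑ k : Fin m, ∑ a : Fin m, ∑ b : Fin m,
        (((if k = a then X b else 0) + (if k = b then X a else 0)) * q⁻¹
          - 2 * (X k * X a * X b) * (q⁻¹ * q⁻¹))^2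
      = (2 * m - 2) * q⁻¹ := by
  have hcard : (Finset.univ : Finset (Fin m)).card = m := by simp
  set s : ℝ := q⁻¹ with hs
  -- inner sum over b
  have hb : ∀ k a : Fin m, ∑ b : Fin m,
      (((if k = a then X b else 0) + (if k = b then X a else 0)) * s
        - 2 * (X k * X a * X b) * (s * s))^2
      = q * ((if k = a then (1:ℝ) else 0) * s - 2 * (X k * X a) * (s * s))^2
        + (((if k = a then X k else 0) + X a) * s - 2 * (X k * X a * X k) * (s * s))^2
        - ((if k = a then X k else 0) * s - 2 * (X k * X a * X k) * (s * s))^2 := by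
    intro k a
    rw [sum_split _ (fun b => ((if k = a then X b else 0) * s
        - 2 * (X k * X a * X b) * (s * s))^2) k
      (by
        intro b hb
        simp only [if_neg (fun h : k = b => hb h.symm)]
        all_goals ring)]
    have h1 : ∀ b : Fin m, ((if k = a then X b else 0) * s
        - 2 * (X k * X a * X b) * (s * s))^2
        = X b ^ 2 * ((if k = a then (1:ℝ) else 0) * s - 2 * (X k * X a) * (s * s))^2 := by
      intro b
      by_cases hka : k = a <;> simp only [if_pos, if_neg, hka, ite_true, ite_false] <;> ring
    rw [Finset.sum_congr rfl fun b _ => h1 b, ← Finset.sum_mul, hq, if_pos rfl]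
    ring
  rw [Finset.sum_congr rfl fun k _ => Finset.sum_congr rfl fun a _ => hb k a]
  -- sum over a
  have ha : ∀ k : Fin m, ∑ a : Fin m,
      (q * ((if k = a then (1:ℝ) else 0) * s - 2 * (X k * X a) * (s * s))^2
        + (((if k = a then X k else 0) + X a) * s - 2 * (X k * X a * X k) * (s * s))^2
        - ((if k = a then X k else 0) * s - 2 * (X k * X a * X k) * (s * s))^2)
      = 2 * q * (s * s) + X k ^ 2 *
          (2 * (s * s) - 8 * q * (s * s * s) + 4 * q^2 * (s * s * s * s)) := by
    intro k
    rw [sum_split _ (fun a => X a ^ 2 *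
        (q * (2 * X k * (s * s))^2 + (s - 2 * (X k * X k) * (s * s))^2
          - (2 * (X k * X k) * (s * s))^2)) k
      (by
        intro a hak
        simp only [if_neg (fun h : k = a => hak h.symm)]
        all_goals ring)]
    rw [← Finset.sum_mul, hq, if_pos rfl]
    simp only [if_true]
    field_simp
    ring
  rw [Finset.sum_congr rfl fun k _ => ha k]
  rw [Finset.sum_add_distrib, Finset.sum_const, ← Finset.sum_mul, hq, hcard]
  have h1 : q * q⁻¹ = 1 := mul_inv_cancel₀ hq0
  field_simp
  linear_combination (4*q^2*(q⁻¹)^3 - 4*q*(q⁻¹)^2 + (2*(m:ℝ)-2)*q⁻¹) * h1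

theorem stmt3 (m : ℕ) (hm : 2 ≤ m) (x : EuclideanSpace ℝ (Fin m)) (hx : x ≠ 0)
    (i j : Fin m) :
    lap (uMN m i j) x
      + (∑ k : Fin m, ∑ a : Fin m, ∑ b : Fin m, (pd k (uMN m a b) x) ^ 2)
          * uMN m i j x = 0 := by
  have hQ0 : ‖x‖^2 ≠ 0 := pow_ne_zero _ (norm_ne_zero_iff.2 hx)
  have hmR : (2:ℝ) ≤ (m:ℝ) := by exact_mod_cast hm
  have hm0 : (m:ℝ) ≠ 0 := by linarith
  have hm1 : (m:ℝ) - 1 ≠ 0 := by linarith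
  set c0 : ℝ := 1 / Real.sqrt ((m : ℝ) * ((m : ℝ) - 1)) with hc0
  have hc0sq : c0^2 = ((m:ℝ) * ((m:ℝ) - 1))⁻¹ := by
    rw [hc0, div_pow, one_pow, Real.sq_sqrt (by nlinarith), one_div]
  have hqsum : ∑ l, x l ^ 2 = ‖x‖^2 := norm_sq_sum x
  -- Laplacian
  have hlap : lap (uMN m i j) x
      = c0 * m * (2 * (if i = j then (1:ℝ) else 0) * (‖x‖^2)⁻¹
          - 2 * m * x i * x j * ((‖x‖^2)⁻¹)^2) := by
    rw [lap, Finset.sum_congr rfl fun k _ => pd_pd_uMN k i j x hx, ← Finset.mul_sum,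
      lap_sum (fun l => x l) (‖x‖^2) i j hqsum hQ0]
  -- Energy
  have hen : ∑ k : Fin m, ∑ a : Fin m, ∑ b : Fin m, (pd k (uMN m a b) x) ^ 2
      = 2 * m * (‖x‖^2)⁻¹ := by
    have h1 : ∀ k a b : Fin m, (pd k (uMN m a b) x)^2
        = (c0 * m)^2 * ((((if k = a then x b else 0) + (if k = b then x a else 0)) * (‖x‖^2)⁻¹
            - 2 * (x k * x a * x b) * ((‖x‖^2)⁻¹ * (‖x‖^2)⁻¹))^2) := by
      intro k a b
      rw [pd_uMN k a b x hx, mul_pow, GMN, sq (‖x‖^2), mul_inv]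
    simp only [h1]
    simp only [← Finset.mul_sum]
    rw [triple_sum (fun l => x l) (‖x‖^2) hqsum hQ0]
    rw [mul_pow, hc0sq]
    field_simp
  rw [hlap, hen, uMN, ← hc0]
  have hsq : (0:ℝ) < Real.sqrt ((m:ℝ) * ((m:ℝ) - 1)) := Real.sqrt_pos.2 (by nlinarith)
  have h2 : c0 ≠ 0 := by
    rw [hc0]
    exact ne_of_gt (div_pos one_pos hsq)
  by_cases hij : i = j
  · simp only [hij, if_pos rfl, if_true]
    field_simp
    ring
  · simp only [if_neg hij]
    field_simp
    ring
end
end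

section
/- Let m ≥ 5 be an integer, let u : ℝ^m ∖ {0} → ℝ^{m²} be the Misawa–Nakauchi map, let α ∈ (0, π/2) satisfy sin²α = 1 − 2/m, and define ũ(x) = (sin α · u(x), cos α). Then ∫_{B^m} |Δũ|² dx = (4m(m−2)/(m−4)) · vol(𝕊^{m−1}) and ∫_{B^m} |∇ũ|² dx = 2 · vol(𝕊^{m−1}), where B^m is the open unit ball in ℝ^m and vol(𝕊^{m−1}) is the (m−1)-dimensional surface measure of the unit sphere in ℝ^m; in particular ũ lies in W^{2,2}(B^m, ℝ^{m²+1}). -/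
noncomputable section

open Real MeasureTheory

/-- Squared norm of the total derivative: `|∇w|² = Σ_{k,a} (∂_k w_a)²`. -/
def gradSq {m : ℕ} {ι : Type*} [Fintype ι]
    (w : ι → EuclideanSpace ℝ (Fin m) → ℝ) (x : EuclideanSpace ℝ (Fin m)) : ℝ :=
  ∑ k : Fin m, ∑ a : ι, (pd k (w a) x) ^ 2

/-- The rotated map `ũ_α = (sin α · u, cos α)`, with values in `ℝ^{m²+1} = ℝ^{m²} × ℝ`. -/
def uTilde (m : ℕ) (α : ℝ) :
    (Fin m × Fin m) ⊕ Unit → EuclideanSpace ℝ (Fin m) → ℝ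
  | Sum.inl p => fun x => Real.sin α * uMN m p.1 p.2 x
  | Sum.inr _ => fun _ => Real.cos α

/-- The open unit ball in `ℝ^m`. -/
def unitBall (m : ℕ) : Set (EuclideanSpace ℝ (Fin m)) := Metric.ball 0 1

/-- The surface measure of the unit sphere `𝕊^{m−1} ⊂ ℝ^m`. -/
def sphereVol (m : ℕ) : ℝ :=
  ((volume : Measure (EuclideanSpace ℝ (Fin m))).toSphere Set.univ).toReal

namespace MN

variable {m : ℕ}

local notation "E" => EuclideanSpace ℝ (Fin m)

/-! ### Basic norm/derivative toolkit -/

def Nn (x : E) : ℝ := ∑ j, x j * x j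

lemma norm_sq (x : E) : ‖x‖ ^ 2 = Nn x := by
  have h : (0:ℝ) ≤ ∑ i, ‖x i‖ ^ 2 := by positivity
  rw [EuclideanSpace.norm_eq, Real.sq_sqrt h]
  simp [Nn, Real.norm_eq_abs, sq_abs, pow_two]

lemma Nn_pos {x : E} (hx : x ≠ 0) : 0 < Nn x := by
  have : 0 < ‖x‖ ^ 2 := pow_pos (norm_pos_iff.mpr hx) 2
  rwa [norm_sq] at this

lemma norm4 (x : E) : ‖x‖ ^ 4 = Nn x * Nn x := by
  have h : ‖x‖ ^ 4 = (‖x‖ ^ 2) * (‖x‖ ^ 2) := by ring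
  rw [h, norm_sq]

lemma hasFDerivAt_proj (i : Fin m) (x : E) :
    HasFDerivAt (fun y : E => y i) (EuclideanSpace.proj (𝕜 := ℝ) i) x :=
  (EuclideanSpace.proj (𝕜 := ℝ) i).hasFDerivAt

@[simp] lemma proj_single (i k : Fin m) :
    (EuclideanSpace.proj (𝕜 := ℝ) i) (EuclideanSpace.single k (1 : ℝ))
      = if i = k then 1 else 0 := by
  simp [EuclideanSpace.single_apply]

def DN (x : E) : E →L[ℝ] ℝ :=
  ∑ j : Fin m, (x j • EuclideanSpace.proj (𝕜 := ℝ) j + x j • EuclideanSpace.proj (𝕜 := ℝ) j)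

lemma hasFDerivAt_Nn (x : E) : HasFDerivAt Nn (DN x) x :=
  HasFDerivAt.fun_sum fun j _ => (hasFDerivAt_proj j x).mul (hasFDerivAt_proj j x)

@[simp] lemma DN_single (x : E) (k : Fin m) :
    DN x (EuclideanSpace.single k 1) = 2 * x k := by
  simp only [DN, ContinuousLinearMap.sum_apply, ContinuousLinearMap.add_apply,
    ContinuousLinearMap.coe_smul', Pi.smul_apply, proj_single, smul_eq_mul]
  simp [mul_ite, Finset.sum_ite_eq', Finset.sum_add_distrib]
  ring

/-! ### Explicit first and second derivative formulas -/

def F1 (i j k : Fin m) (x : E) : ℝ :=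
  ((if i = k then (1:ℝ) else 0) * x j + (if j = k then (1:ℝ) else 0) * x i) * (Nn x)⁻¹
    - 2 * (x i * x j * x k) * (Nn x * Nn x)⁻¹

def F2 (i j k l : Fin m) (x : E) : ℝ :=
  ((if i = k then (1:ℝ) else 0) * (if j = l then (1:ℝ) else 0)
    + (if j = k then (1:ℝ) else 0) * (if i = l then (1:ℝ) else 0)) * (Nn x)⁻¹
  - 2 * (((if i = k then (1:ℝ) else 0) * x j + (if j = k then (1:ℝ) else 0) * x i) * x l)
      * (Nn x * Nn x)⁻¹
  - 2 * ((if i = l then (1:ℝ) else 0) * (x j * x k) + (if j = l then (1:ℝ) else 0) * (x i * x k)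
      + (if k = l then (1:ℝ) else 0) * (x i * x j)) * (Nn x * Nn x)⁻¹
  + 8 * (x i * x j * x k * x l) * (Nn x * Nn x * Nn x)⁻¹

lemma hasInv {x : E} (hx : x ≠ 0) :
    HasFDerivAt (fun y : E => (Nn y)⁻¹) ((-(Nn x ^ 2)⁻¹) • DN x) x :=
  (hasDerivAt_inv (Nn_pos hx).ne').comp_hasFDerivAt x (hasFDerivAt_Nn x)

lemma hasInv2 {x : E} (hx : x ≠ 0) :
    HasFDerivAt (fun y : E => (Nn y * Nn y)⁻¹)
      ((-((Nn x * Nn x) ^ 2)⁻¹) • (Nn x • DN x + Nn x • DN x)) x :=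
  (hasDerivAt_inv (by have := Nn_pos hx; positivity)).comp_hasFDerivAt x
    ((hasFDerivAt_Nn x).mul (hasFDerivAt_Nn x))

lemma exists_deriv_g (i j : Fin m) {x : E} (hx : x ≠ 0) :
    ∃ D : E →L[ℝ] ℝ, HasFDerivAt (fun y : E => y i * y j * (Nn y)⁻¹) D x ∧
      ∀ k, D (EuclideanSpace.single k 1) = F1 i j k x := by
  refine ⟨_, ((hasFDerivAt_proj i x).mul (hasFDerivAt_proj j x)).mul (hasInv hx), ?_⟩
  intro k
  have hN := (Nn_pos hx).ne'
  simp only [ContinuousLinearMap.add_apply, ContinuousLinearMap.coe_smul', Pi.smul_apply,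
    ContinuousLinearMap.coe_neg', Pi.neg_apply, proj_single, DN_single, smul_eq_mul, Pi.mul_apply]
  rw [F1]
  field_simp
  ring

lemma exists_deriv_F1 (i j k : Fin m) {x : E} (hx : x ≠ 0) :
    ∃ D : E →L[ℝ] ℝ, HasFDerivAt (F1 i j k) D x ∧
      ∀ l, D (EuclideanSpace.single l 1) = F2 i j k l x := by
  have hN := (Nn_pos hx).ne'
  refine ⟨_, (((((hasFDerivAt_proj j x).const_mul _).add
      ((hasFDerivAt_proj i x).const_mul _)).mul (hasInv hx)).sub
      (((((hasFDerivAt_proj i x).mul (hasFDerivAt_proj j x)).mul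
        (hasFDerivAt_proj k x)).const_mul 2).mul (hasInv2 hx))), ?_⟩
  intro l
  simp only [ContinuousLinearMap.add_apply, ContinuousLinearMap.sub_apply,
    ContinuousLinearMap.coe_smul', Pi.smul_apply, ContinuousLinearMap.coe_neg', Pi.neg_apply,
    proj_single, DN_single, smul_eq_mul, Pi.mul_apply, Pi.add_apply]
  rw [F2]
  field_simp
  split_ifs <;> ring

/-! ### Derivatives of `uTilde` -/

def Kc (m : ℕ) (α : ℝ) : ℝ :=
  Real.sin α * (1 / Real.sqrt ((m : ℝ) * ((m : ℝ) - 1))) * (m : ℝ)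

lemma uTilde_inl_eq (α : ℝ) (i j : Fin m) :
    uTilde m α (Sum.inl (i, j)) = fun y : E =>
      (Real.sin α * (1 / Real.sqrt ((m : ℝ) * ((m : ℝ) - 1)))) * (-(if i = j then (1:ℝ) else 0))
        + Kc m α * (y i * y j * (Nn y)⁻¹) := by
  funext y
  simp only [uTilde, uMN, Kc]
  rw [norm_sq, div_eq_mul_inv]
  ring

lemma pd_uTilde_inl (α : ℝ) (i j k : Fin m) {x : E} (hx : x ≠ 0) :
    pd k (uTilde m α (Sum.inl (i, j))) x = Kc m α * F1 i j k x := by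
  obtain ⟨D, hD, hDev⟩ := exists_deriv_g i j hx
  rw [uTilde_inl_eq, pd, ((hD.const_mul (Kc m α)).const_add _).fderiv]
  simp [hDev k]

lemma pd2_uTilde_inl (α : ℝ) (i j k l : Fin m) {x : E} (hx : x ≠ 0) :
    pd l (pd k (uTilde m α (Sum.inl (i, j)))) x = Kc m α * F2 i j k l x := by
  obtain ⟨D, hD, hDev⟩ := exists_deriv_F1 i j k hx
  have hev : pd k (uTilde m α (Sum.inl (i, j))) =ᶠ[nhds x] fun y => Kc m α * F1 i j k y :=
    Filter.eventuallyEq_of_mem (compl_singleton_mem_nhds hx)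
      (fun y hy => pd_uTilde_inl α i j k hy)
  rw [pd, hev.fderiv_eq, fderiv_const_mul hD.differentiableAt, hD.fderiv]
  simp [hDev l]

lemma pd_uTilde_inr (α : ℝ) (u : Unit) (k : Fin m) (x : E) :
    pd k (uTilde m α (Sum.inr u)) x = 0 := by
  simp [pd, uTilde, fderiv_const_apply]

lemma pd2_uTilde_inr (α : ℝ) (u : Unit) (k l : Fin m) (x : E) :
    pd l (pd k (uTilde m α (Sum.inr u))) x = 0 := by
  have h : pd k (uTilde m α (Sum.inr u)) = fun _ : E => (0:ℝ) :=
    funext fun y => pd_uTilde_inr α u k y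
  simp only [pd] at h ⊢
  rw [h]
  simp [fderiv_const_apply]

lemma sum_F2_diag (i j : Fin m) {x : E} (hx : x ≠ 0) :
    ∑ k, F2 i j k k x
      = (if i = j then (1:ℝ) else 0) * (2 * (Nn x)⁻¹)
        + (x i * x j) * (-(2*(m:ℝ)) * (Nn x * Nn x)⁻¹) := by
  have hN := (Nn_pos hx).ne'
  have key : ∀ k : Fin m, F2 i j k k x
      = (if i = k then (if j = k then 2*(Nn x)⁻¹ else 0) else 0)
        + (if i = k then (-4)*(x j * x k)*(Nn x * Nn x)⁻¹ else 0)
        + (if j = k then (-4)*(x i * x k)*(Nn x * Nn x)⁻¹ else 0)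
        + ((-2)*(x i * x j)*(Nn x * Nn x)⁻¹)
        + (8*(x i * x j)*(Nn x * Nn x * Nn x)⁻¹) * (x k * x k) := by
    intro k
    simp only [F2, eq_self_iff_true, if_true]
    split_ifs <;> ring
  rw [Finset.sum_congr rfl fun k _ => key k]
  simp only [Finset.sum_add_distrib, Finset.sum_ite_eq, Finset.mem_univ, if_true,
    Finset.sum_const, Finset.card_univ, Fintype.card_fin, nsmul_eq_mul, ← Finset.mul_sum]
  have hsum : ∑ k : Fin m, x k * x k = Nn x := rfl
  rw [hsum]
  rcases eq_or_ne i j with rfl | hij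
  · rw [if_pos rfl, if_pos rfl]
    field_simp
    ring
  · rw [if_neg hij, if_neg (Ne.symm hij)]
    field_simp
    ring

lemma lap_uTilde_inl (α : ℝ) (i j : Fin m) {x : E} (hx : x ≠ 0) :
    lap (uTilde m α (Sum.inl (i, j))) x
      = (if i = j then (1:ℝ) else 0) * (2 * Kc m α * (Nn x)⁻¹)
        + (x i * x j) * (-(2*(m:ℝ)*Kc m α) * (Nn x * Nn x)⁻¹) := by
  rw [lap, Finset.sum_congr rfl fun k _ => pd2_uTilde_inl α i j k k hx, ← Finset.mul_sum,
    sum_F2_diag i j hx]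
  ring

lemma lap_uTilde_inr (α : ℝ) (u : Unit) (x : E) :
    lap (uTilde m α (Sum.inr u)) x = 0 := by
  simp [lap, pd2_uTilde_inr]

/-! ### Algebraic summation identities -/

lemma sum_quad (v : Fin m → ℝ) (A B : ℝ) :
    ∑ i : Fin m, ∑ j : Fin m, ((if i = j then (1:ℝ) else 0) * A + (v i * v j) * B)^2
      = m*A^2 + 2*A*B*(∑ i, v i * v i) + B^2*(∑ i, v i * v i)^2 := by
  have key : ∀ i j : Fin m, ((if i = j then (1:ℝ) else 0) * A + (v i * v j) * B)^2
      = (B^2*(v i * v i)) * (v j * v j) + (if i = j then A^2 + 2*A*B*(v i * v i) else 0) := by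
    intro i j
    split_ifs with h
    · subst h; ring
    · ring
  have hj : ∀ i : Fin m, ∑ j, ((if i = j then (1:ℝ) else 0) * A + (v i * v j) * B)^2
      = (B^2*(v i * v i)) * (∑ j, v j * v j) + (A^2 + 2*A*B*(v i * v i)) := by
    intro i
    rw [Finset.sum_congr rfl fun j _ => key i j, Finset.sum_add_distrib, ← Finset.mul_sum,
      Finset.sum_ite_eq, if_pos (Finset.mem_univ i)]
  rw [Finset.sum_congr rfl fun i _ => hj i, Finset.sum_add_distrib, ← Finset.sum_mul,
    ← Finset.mul_sum, Finset.sum_add_distrib, Finset.sum_const, Finset.card_univ,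
    Fintype.card_fin, ← Finset.mul_sum]
  push_cast
  ring

lemma sum_grad (v : Fin m → ℝ) (a c : ℝ) :
    ∑ k : Fin m, ∑ i : Fin m, ∑ j : Fin m,
        (((if i = k then (1:ℝ) else 0) * v j + (if j = k then (1:ℝ) else 0) * v i) * a
          - 2 * (v i * v j * v k) * c)^2
      = (2*m+2)*a^2*(∑ i, v i * v i) - 8*a*c*(∑ i, v i * v i)^2
          + 4*c^2*(∑ i, v i * v i)^3 := by
  set S := ∑ i, v i * v i with hS
  have key : ∀ k i j : Fin m,
      (((if i = k then (1:ℝ) else 0) * v j + (if j = k then (1:ℝ) else 0) * v i) * a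
          - 2 * (v i * v j * v k) * c)^2
      = (4*c^2*((v i * v i)*(v k * v k))) * (v j * v j)
        + (if j = k then (v i * v i)*a^2 - 4*a*c*((v i * v i)*(v k * v k)) else 0)
        + (if i = k then (1:ℝ) else 0) * ((a^2 - 4*a*c*(v k * v k)) * (v j * v j))
        + (if i = k then (1:ℝ) else 0) * (if j = k then 2*((v k * v k)*a^2) else 0) := by
    intro k i j
    by_cases h1 : i = k <;> by_cases h2 : j = k
    · subst h1; subst h2; simp; ring
    · subst h1; simp [h2]; ring
    · subst h2; simp [h1]; ring
    · simp [h1, h2]; ring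
  have hj : ∀ k i : Fin m, ∑ j, (((if i = k then (1:ℝ) else 0) * v j
        + (if j = k then (1:ℝ) else 0) * v i) * a - 2 * (v i * v j * v k) * c)^2
      = ((4*c^2*(v k * v k))*S) * (v i * v i)
        + (a^2*(v i * v i) - (4*a*c*(v k * v k))*(v i * v i))
        + (if i = k then ((a^2 - 4*a*c*(v k * v k))*S + 2*((v k * v k)*a^2)) else 0) := by
    intro k i
    rw [Finset.sum_congr rfl fun j _ => key k i j]
    simp only [Finset.sum_add_distrib, ← Finset.mul_sum, Finset.sum_ite_eq',
      Finset.mem_univ, if_true, ← hS]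
    rw [boole_mul, boole_mul]
    split_ifs with h
    · ring
    · ring
  have hk : ∀ k : Fin m, ∑ i : Fin m, ∑ j : Fin m,
      (((if i = k then (1:ℝ) else 0) * v j + (if j = k then (1:ℝ) else 0) * v i) * a
          - 2 * (v i * v j * v k) * c)^2
      = (4*c^2*S*S - 8*a*c*S + 2*a^2) * (v k * v k) + 2*(a^2*S) := by
    intro k
    rw [Finset.sum_congr rfl fun i _ => hj k i]
    simp only [Finset.sum_add_distrib, Finset.sum_sub_distrib, ← Finset.mul_sum,
      Finset.sum_ite_eq', Finset.mem_univ, if_true, ← hS]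
    ring
  rw [Finset.sum_congr rfl fun k _ => hk k, Finset.sum_add_distrib, ← Finset.mul_sum,
    Finset.sum_const, Finset.card_univ, Fintype.card_fin, nsmul_eq_mul, ← hS]
  ring

/-! ### Integration in polar coordinates -/

lemma sphereVol_eq : sphereVol m = m * (volume (Metric.ball (0 : E) 1)).toReal := by
  rw [sphereVol, Measure.toSphere_apply_univ, ENNReal.toReal_mul, finrank_euclideanSpace_fin]
  simp

lemma sphereVol_pos (hm0 : 0 < m) : 0 < sphereVol m := by
  rw [sphereVol_eq]
  have h1 : 0 < (volume (Metric.ball (0 : E) 1)).toReal :=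
    ENNReal.toReal_pos (Metric.measure_ball_pos volume 0 one_pos).ne' measure_ball_lt_top.ne
  positivity

lemma integral_ball_inv_pow (hm0 : 0 < m) (n : ℕ) (hnm : n < m) :
    ∫ x in unitBall m, (‖x‖ ^ n)⁻¹ = sphereVol m / ((m : ℝ) - n) := by
  haveI : Nonempty (Fin m) := ⟨⟨0, hm0⟩⟩
  set g : ℝ → ℝ := Set.indicator (Set.Iio 1) (fun y => (y ^ n)⁻¹) with hg
  have h1 : ∫ x in unitBall m, (‖x‖ ^ n)⁻¹ = ∫ x : E, g ‖x‖ := by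
    rw [unitBall, ← integral_indicator measurableSet_ball]
    congr 1; funext x
    have hmem : x ∈ Metric.ball (0 : E) 1 ↔ ‖x‖ < 1 := mem_ball_zero_iff
    have hmem2 : ‖x‖ ∈ Set.Iio (1:ℝ) ↔ ‖x‖ < 1 := Set.mem_Iio
    by_cases hx : ‖x‖ < 1
    · rw [Set.indicator_of_mem (hmem.mpr hx), hg, Set.indicator_of_mem (hmem2.mpr hx)]
    · rw [Set.indicator_of_notMem (fun hc => hx (hmem.mp hc)), hg,
        Set.indicator_of_notMem (fun hc => hx (hmem2.mp hc))]
  rw [h1, integral_fun_norm_addHaar (volume : Measure E) g, finrank_euclideanSpace_fin]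
  have h2 : ∫ y in Set.Ioi (0:ℝ), y ^ (m-1) • g y = 1 / ((m:ℝ) - n) := by
    have hpt : (fun y : ℝ => y ^ (m-1) • g y)
        = Set.indicator (Set.Iio 1) (fun y => y ^ (m-1) * (y ^ n)⁻¹) := by
      funext y
      simp only [hg, Set.indicator_apply, smul_eq_mul]
      split_ifs <;> simp
    rw [hpt, setIntegral_indicator measurableSet_Iio, Set.Ioi_inter_Iio]
    have hpt2 : ∀ y ∈ Set.Ioo (0:ℝ) 1, y ^ (m-1) * (y ^ n)⁻¹ = y ^ (m-1-n) := by
      intro y hy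
      exact (pow_sub₀ y (ne_of_gt hy.1) (by omega : n ≤ m - 1)).symm
    rw [setIntegral_congr_fun measurableSet_Ioo hpt2, ← integral_Ioc_eq_integral_Ioo,
      ← intervalIntegral.integral_of_le zero_le_one, integral_pow]
    have hcast : ((m - 1 - n : ℕ) : ℝ) + 1 = (m : ℝ) - n := by
      have h3 : (m - 1 - n : ℕ) + 1 + n = m := by omega
      have := congrArg (fun t : ℕ => (t : ℝ)) h3
      push_cast at this
      linarith
    rw [one_pow, zero_pow (by omega : m - 1 - n + 1 ≠ 0)]
    rw [hcast, sub_zero]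
  rw [h2, sphereVol_eq]
  simp only [nsmul_eq_mul, smul_eq_mul, measureReal_def]
  ring

lemma integrableOn_ball_inv_pow (hm0 : 0 < m) (n : ℕ) (hnm : n < m) :
    IntegrableOn (fun x : E => (‖x‖ ^ n)⁻¹) (unitBall m) := by
  by_contra h
  have heq := integral_ball_inv_pow hm0 n hnm
  rw [integral_undef h] at heq
  have hpos : 0 < sphereVol m / ((m : ℝ) - n) := by
    apply div_pos (sphereVol_pos hm0)
    have : (n : ℝ) < m := by exact_mod_cast hnm
    linarith
  linarith [heq ▸ hpos]

end MN

namespace MN2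
open MN
variable {m : ℕ}
local notation "E" => EuclideanSpace ℝ (Fin m)

lemma C2 (hm : 2 ≤ m) :
    (1 / Real.sqrt ((m:ℝ)*((m:ℝ)-1)))^2 = ((m:ℝ)*((m:ℝ)-1))⁻¹ := by
  have hm' : (2:ℝ) ≤ (m:ℝ) := by exact_mod_cast hm
  have hz : (0:ℝ) < (m:ℝ)*((m:ℝ)-1) := by nlinarith
  rw [div_pow, one_pow, Real.sq_sqrt hz.le, one_div]

lemma K2m (hm : 5 ≤ m) {α : ℝ} (hsin : Real.sin α ^ 2 = 1 - 2/(m:ℝ)) :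
    Kc m α ^ 2 * ((m:ℝ)-1) = (m:ℝ) - 2 := by
  have hm' : (5:ℝ) ≤ (m:ℝ) := by exact_mod_cast hm
  have h0 : (m:ℝ) ≠ 0 := by linarith
  have h1 : (m:ℝ) - 1 ≠ 0 := by linarith
  rw [Kc, mul_pow, mul_pow, hsin, C2 (by omega)]
  field_simp

lemma lapSq_eq (hm : 5 ≤ m) {α : ℝ} (hsin : Real.sin α ^ 2 = 1 - 2/(m:ℝ)) {x : E}
    (hx : x ≠ 0) :
    ∑ a : (Fin m × Fin m) ⊕ Unit, (lap (uTilde m α a) x)^2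
      = (4*(m:ℝ)*((m:ℝ)-2)) * (‖x‖^4)⁻¹ := by
  have hN := Nn_pos hx
  have hm' : (5:ℝ) ≤ (m:ℝ) := by exact_mod_cast hm
  rw [Fintype.sum_sum_type]
  have hunit : ∑ u : Unit, (lap (uTilde m α (Sum.inr u)) x)^2 = 0 := by
    simp [lap_uTilde_inr]
  rw [hunit, add_zero, Fintype.sum_prod_type]
  rw [Finset.sum_congr rfl fun i _ => Finset.sum_congr rfl fun j _ =>
    by rw [lap_uTilde_inl α i j hx]]
  rw [sum_quad, show (∑ i, x i * x i) = Nn x from rfl, norm4]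
  have hK := K2m hm hsin
  have h1 : (m:ℝ) - 1 ≠ 0 := by linarith
  field_simp
  linear_combination 4 * hK

lemma gradSq_eq (hm : 5 ≤ m) {α : ℝ} (hsin : Real.sin α ^ 2 = 1 - 2/(m:ℝ)) {x : E}
    (hx : x ≠ 0) :
    gradSq (uTilde m α) x = (2*((m:ℝ)-2)) * (‖x‖^2)⁻¹ := by
  have hN := Nn_pos hx
  have hm' : (5:ℝ) ≤ (m:ℝ) := by exact_mod_cast hm
  have key : ∀ k, ∑ a : (Fin m × Fin m) ⊕ Unit, (pd k (uTilde m α a) x)^2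
      = ∑ i : Fin m, ∑ j : Fin m,
        (((if i = k then (1:ℝ) else 0) * x j + (if j = k then (1:ℝ) else 0) * x i)
            * (Kc m α * (Nn x)⁻¹)
          - 2 * (x i * x j * x k) * (Kc m α * (Nn x * Nn x)⁻¹))^2 := by
    intro k
    rw [Fintype.sum_sum_type]
    have hunit : ∑ u : Unit, (pd k (uTilde m α (Sum.inr u)) x)^2 = 0 := by
      simp [pd_uTilde_inr]
    rw [hunit, add_zero, Fintype.sum_prod_type]
    refine Finset.sum_congr rfl fun i _ => Finset.sum_congr rfl fun j _ => ?_
    rw [pd_uTilde_inl α i j k hx, F1]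
    ring
  rw [gradSq, Finset.sum_congr rfl fun k _ => key k, sum_grad,
    show (∑ i, x i * x i) = Nn x from rfl, norm_sq]
  have hK := K2m hm hsin
  have h1 : (m:ℝ) - 1 ≠ 0 := by linarith
  field_simp
  linear_combination 2 * hK

lemma usq_eq (hm : 5 ≤ m) (α : ℝ) {x : E} (hx : x ≠ 0) :
    ∑ a : (Fin m × Fin m) ⊕ Unit, (uTilde m α a x)^2 = 1 := by
  have hN := Nn_pos hx
  have hm' : (5:ℝ) ≤ (m:ℝ) := by exact_mod_cast hm
  rw [Fintype.sum_sum_type]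
  have hunit : ∑ u : Unit, (uTilde m α (Sum.inr u) x)^2 = Real.cos α ^ 2 := by
    simp [uTilde]
  rw [hunit, Fintype.sum_prod_type]
  have hpt : ∀ i j : Fin m, (uTilde m α (Sum.inl (i, j)) x)^2
      = ((if i = j then (1:ℝ) else 0) * (-(Real.sin α * (1 / Real.sqrt ((m:ℝ)*((m:ℝ)-1)))))
          + (x i * x j) * (Kc m α * (Nn x)⁻¹))^2 := by
    intro i j
    rw [uTilde_inl_eq]
    ring
  rw [Finset.sum_congr rfl fun i _ => Finset.sum_congr rfl fun j _ => hpt i j, sum_quad,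
    show (∑ i, x i * x i) = Nn x from rfl]
  have h1 : (m:ℝ) - 1 ≠ 0 := by linarith
  have h0 : (m:ℝ) ≠ 0 := by linarith
  have hsc := Real.sin_sq_add_cos_sq α
  rw [Kc]
  have hCC : (1 / Real.sqrt ((m:ℝ)*((m:ℝ)-1)))^2 * ((m:ℝ)*((m:ℝ)-1)) = 1 := by
    rw [C2 (show 2 ≤ m by omega)]
    have hz : (0:ℝ) < (m:ℝ)*((m:ℝ)-1) := by nlinarith
    exact inv_mul_cancel₀ hz.ne'
  have hNN : (Nn x)⁻¹ * Nn x = 1 := inv_mul_cancel₀ hN.ne'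
  linear_combination (Real.sin α^2) * hCC + hsc
    + (Real.sin α^2 * (1/Real.sqrt ((m:ℝ)*((m:ℝ)-1)))^2 * (m:ℝ) * (2*(m:ℝ)-2)
      + Real.sin α^2 * (1/Real.sqrt ((m:ℝ)*((m:ℝ)-1)))^2 * (m:ℝ)^2 * ((Nn x)⁻¹*Nn x - 1)) * hNN

lemma abs_coord (x : E) (i : Fin m) : |x i| ≤ ‖x‖ := by
  have h1 : x i * x i ≤ Nn x :=
    Finset.single_le_sum (f := fun j => x j * x j) (fun j _ => mul_self_nonneg _)
      (Finset.mem_univ i)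
  have h2 : |x i|^2 ≤ ‖x‖^2 := by
    rw [sq_abs, norm_sq]
    nlinarith
  calc |x i| = Real.sqrt (|x i|^2) := (Real.sqrt_sq (abs_nonneg _)).symm
    _ ≤ Real.sqrt (‖x‖^2) := Real.sqrt_le_sqrt h2
    _ = ‖x‖ := Real.sqrt_sq (norm_nonneg _)

lemma F2_bound (i j k l : Fin m) {x : E} (hx : x ≠ 0) :
    |F2 i j k l x| ≤ 20 * (Nn x)⁻¹ := by
  set t := ‖x‖ with ht
  have ht0 : 0 < t := norm_pos_iff.mpr hx
  have hNt : Nn x = t^2 := (norm_sq x).symm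
  have hco : ∀ i : Fin m, |x i| ≤ t := fun i => abs_coord x i
  have hab : ∀ a b : Fin m, |x a * x b| ≤ t^2 := by
    intro a b
    rw [abs_mul]
    calc |x a| * |x b| ≤ t * t :=
          mul_le_mul (hco a) (hco b) (abs_nonneg _) ht0.le
      _ = t^2 := by ring
  have habcd : |x i * x j * x k * x l| ≤ t^4 := by
    rw [abs_mul, abs_mul]
    calc |x i * x j| * |x k| * |x l| ≤ t^2 * t * t := by
          apply mul_le_mul _ (hco l) (abs_nonneg _) (by positivity)
          exact mul_le_mul (hab i j) (hco k) (abs_nonneg _) (by positivity)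
      _ = t^4 := by ring
  have hδδ : |(if i = k then (1:ℝ) else 0) * (if j = l then (1:ℝ) else 0)
      + (if j = k then (1:ℝ) else 0) * (if i = l then (1:ℝ) else 0)| ≤ 2 := by
    split_ifs <;> norm_num
  have hP : |(if i = k then (1:ℝ) else 0) * x j + (if j = k then (1:ℝ) else 0) * x i|
      ≤ 2 * t := by
    split_ifs with h1 h2 h2
    · simp only [one_mul]
      calc |x j + x i| ≤ |x j| + |x i| := abs_add_le _ _
        _ ≤ 2 * t := by have := hco i; have := hco j; linarith
    · simp only [one_mul, zero_mul, add_zero]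
      have := hco j; linarith
    · simp only [one_mul, zero_mul, zero_add]
      have := hco i; linarith
    · simp only [zero_mul, add_zero, abs_zero]; positivity
  have h3sum : |(if i = l then (1:ℝ) else 0) * (x j * x k)
      + (if j = l then (1:ℝ) else 0) * (x i * x k)
      + (if k = l then (1:ℝ) else 0) * (x i * x j)| ≤ 3 * t^2 := by
    have e1 : |(if i = l then (1:ℝ) else 0) * (x j * x k)| ≤ t^2 := by
      rw [abs_mul]
      calc |(if i = l then (1:ℝ) else 0)| * |x j * x k| ≤ 1 * t^2 := by
            apply mul_le_mul _ (hab j k) (abs_nonneg _) zero_le_one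
            split_ifs <;> norm_num
        _ = t^2 := one_mul _
    have e2 : |(if j = l then (1:ℝ) else 0) * (x i * x k)| ≤ t^2 := by
      rw [abs_mul]
      calc |(if j = l then (1:ℝ) else 0)| * |x i * x k| ≤ 1 * t^2 := by
            apply mul_le_mul _ (hab i k) (abs_nonneg _) zero_le_one
            split_ifs <;> norm_num
        _ = t^2 := one_mul _
    have e3 : |(if k = l then (1:ℝ) else 0) * (x i * x j)| ≤ t^2 := by
      rw [abs_mul]
      calc |(if k = l then (1:ℝ) else 0)| * |x i * x j| ≤ 1 * t^2 := by
            apply mul_le_mul _ (hab i j) (abs_nonneg _) zero_le_one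
            split_ifs <;> norm_num
        _ = t^2 := one_mul _
    calc |_ + _ + _| ≤ |(if i = l then (1:ℝ) else 0) * (x j * x k)
          + (if j = l then (1:ℝ) else 0) * (x i * x k)|
          + |(if k = l then (1:ℝ) else 0) * (x i * x j)| := abs_add_le _ _
      _ ≤ |(if i = l then (1:ℝ) else 0) * (x j * x k)|
          + |(if j = l then (1:ℝ) else 0) * (x i * x k)|
          + |(if k = l then (1:ℝ) else 0) * (x i * x j)| := by
            have := abs_add_le ((if i = l then (1:ℝ) else 0) * (x j * x k))
              ((if j = l then (1:ℝ) else 0) * (x i * x k))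
            linarith
      _ ≤ 3 * t^2 := by linarith
  -- now the triangle inequality on F2
  have tri : ∀ a b c d : ℝ, |a - b - c + d| ≤ |a| + |b| + |c| + |d| := by
    intro a b c d
    calc |a - b - c + d| ≤ |a - b - c| + |d| := abs_add_le _ _
      _ ≤ |a - b| + |c| + |d| := by have := abs_sub (a - b) c; linarith
      _ ≤ |a| + |b| + |c| + |d| := by have := abs_sub a b; linarith
  have hq1 : |(Nn x)⁻¹| = (t^2)⁻¹ := by rw [hNt, abs_of_nonneg (by positivity)]
  have hq2 : |(Nn x * Nn x)⁻¹| = (t^2*t^2)⁻¹ := by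
    rw [hNt, abs_of_nonneg (by positivity)]
  have hq3 : |(Nn x * Nn x * Nn x)⁻¹| = (t^2*t^2*t^2)⁻¹ := by
    rw [hNt, abs_of_nonneg (by positivity)]
  rw [F2]
  refine le_trans (tri _ _ _ _) ?_
  have b1 : |((if i = k then (1:ℝ) else 0) * (if j = l then (1:ℝ) else 0)
      + (if j = k then (1:ℝ) else 0) * (if i = l then (1:ℝ) else 0)) * (Nn x)⁻¹|
      ≤ 2 * (t^2)⁻¹ := by
    rw [abs_mul, hq1]
    exact mul_le_mul_of_nonneg_right hδδ (by positivity)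
  have b2 : |2 * (((if i = k then (1:ℝ) else 0) * x j + (if j = k then (1:ℝ) else 0) * x i)
      * x l) * (Nn x * Nn x)⁻¹| ≤ 2 * ((2*t) * t) * (t^2*t^2)⁻¹ := by
    rw [abs_mul, hq2, abs_mul, abs_mul]
    apply mul_le_mul_of_nonneg_right _ (by positivity)
    simp only [abs_two]
    apply mul_le_mul_of_nonneg_left _ (by norm_num)
    exact mul_le_mul hP (hco l) (abs_nonneg _) (by positivity)
  have b3 : |2 * ((if i = l then (1:ℝ) else 0) * (x j * x k)
      + (if j = l then (1:ℝ) else 0) * (x i * x k)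
      + (if k = l then (1:ℝ) else 0) * (x i * x j)) * (Nn x * Nn x)⁻¹|
      ≤ 2 * (3*t^2) * (t^2*t^2)⁻¹ := by
    rw [abs_mul, hq2, abs_mul]
    apply mul_le_mul_of_nonneg_right _ (by positivity)
    simp only [abs_two]
    exact mul_le_mul_of_nonneg_left h3sum (by norm_num)
  have b4 : |8 * (x i * x j * x k * x l) * (Nn x * Nn x * Nn x)⁻¹|
      ≤ 8 * t^4 * (t^2*t^2*t^2)⁻¹ := by
    rw [abs_mul, hq3, abs_mul]
    apply mul_le_mul_of_nonneg_right _ (by positivity)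
    have : |(8:ℝ)| = 8 := by norm_num
    rw [this]
    exact mul_le_mul_of_nonneg_left habcd (by norm_num)
  have harith : 2 * (t^2)⁻¹ + 2 * ((2*t) * t) * (t^2*t^2)⁻¹ + 2 * (3*t^2) * (t^2*t^2)⁻¹
      + 8 * t^4 * (t^2*t^2*t^2)⁻¹ = 20 * (t^2)⁻¹ := by
    have htne : t ≠ 0 := ht0.ne'
    field_simp
    ring
  rw [hNt] at b1 b2 b3 b4
  rw [hNt]
  linarith

end MN2

open MN MN2 in
theorem stmt6 (m : ℕ) (hm : 5 ≤ m) (α : ℝ) (hα : α ∈ Set.Ioo 0 (π / 2))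
    (hsin : Real.sin α ^ 2 = 1 - 2 / (m : ℝ)) :
    (∫ x in unitBall m, ∑ a : (Fin m × Fin m) ⊕ Unit, (lap (uTilde m α a) x) ^ 2)
        = (4 * (m : ℝ) * ((m : ℝ) - 2) / ((m : ℝ) - 4)) * sphereVol m
      ∧ (∫ x in unitBall m, gradSq (uTilde m α) x) = 2 * sphereVol m
      ∧ IntegrableOn
          (fun x => ∑ a : (Fin m × Fin m) ⊕ Unit, (uTilde m α a x) ^ 2) (unitBall m)
      ∧ IntegrableOn (fun x => gradSq (uTilde m α) x) (unitBall m)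
      ∧ IntegrableOn
          (fun x => ∑ k : Fin m, ∑ l : Fin m, ∑ a : (Fin m × Fin m) ⊕ Unit,
            (pd l (pd k (uTilde m α a)) x) ^ 2) (unitBall m) := by
  have hm0 : 0 < m := by omega
  have hm4 : (4:ℕ) < m := by omega
  have hm2 : (2:ℕ) < m := by omega
  have hmr : (5:ℝ) ≤ (m:ℝ) := by exact_mod_cast hm
  haveI : Nontrivial (EuclideanSpace ℝ (Fin m)) := by
    refine ⟨0, EuclideanSpace.single ⟨0, hm0⟩ 1, fun h => ?_⟩
    have h1 : (EuclideanSpace.single (⟨0, hm0⟩ : Fin m) (1:ℝ)) ⟨0, hm0⟩ = 1 := by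
      simp [EuclideanSpace.single_apply]
    rw [← h] at h1
    simp at h1
  have hae : ∀ᵐ x ∂(volume.restrict (unitBall m)), x ≠ (0 : EuclideanSpace ℝ (Fin m)) := by
    refine ae_restrict_of_ae ?_
    have h0 : (volume : Measure (EuclideanSpace ℝ (Fin m))) {0} = 0 := measure_singleton 0
    rw [ae_iff]
    convert h0 using 2
    ext y; simp
  -- part 1
  have e1 : (fun x => ∑ a : (Fin m × Fin m) ⊕ Unit, (lap (uTilde m α a) x)^2)
      =ᵐ[volume.restrict (unitBall m)]
        (fun x => (4*(m:ℝ)*((m:ℝ)-2)) * (‖x‖^4)⁻¹) :=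
    hae.mono fun x hx => lapSq_eq hm hsin hx
  have I1 : (∫ x in unitBall m, ∑ a : (Fin m × Fin m) ⊕ Unit, (lap (uTilde m α a) x) ^ 2)
      = (4 * (m : ℝ) * ((m : ℝ) - 2) / ((m : ℝ) - 4)) * sphereVol m := by
    rw [integral_congr_ae e1, integral_const_mul, integral_ball_inv_pow hm0 4 hm4]
    have h4 : (m:ℝ) - 4 ≠ 0 := by push_cast; linarith
    push_cast
    field_simp
  -- part 2
  have e2 : (fun x => gradSq (uTilde m α) x) =ᵐ[volume.restrict (unitBall m)]
      (fun x => (2*((m:ℝ)-2)) * (‖x‖^2)⁻¹) :=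
    hae.mono fun x hx => gradSq_eq hm hsin hx
  have I2 : (∫ x in unitBall m, gradSq (uTilde m α) x) = 2 * sphereVol m := by
    rw [integral_congr_ae e2, integral_const_mul, integral_ball_inv_pow hm0 2 hm2]
    have h2 : (m:ℝ) - 2 ≠ 0 := by push_cast; linarith
    push_cast
    field_simp
  -- part 3
  have e3 : (fun x => ∑ a : (Fin m × Fin m) ⊕ Unit, (uTilde m α a x)^2)
      =ᵐ[volume.restrict (unitBall m)] (fun _ => (1:ℝ)) :=
    hae.mono fun x hx => usq_eq hm α hx
  have I3 : IntegrableOn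
      (fun x => ∑ a : (Fin m × Fin m) ⊕ Unit, (uTilde m α a x) ^ 2) (unitBall m) := by
    have hc : IntegrableOn (fun _ => (1:ℝ)) (unitBall m) := by
      rw [IntegrableOn, integrable_const_iff]
      right
      rw [unitBall]
      exact ⟨by rw [Measure.restrict_apply_univ]; exact measure_ball_lt_top⟩
    exact hc.congr e3.symm
  -- part 4
  have I4 : IntegrableOn (fun x => gradSq (uTilde m α) x) (unitBall m) :=
    (((integrableOn_ball_inv_pow hm0 2 hm2).const_mul (2*((m:ℝ)-2))).congr e2.symm)
  -- part 5
  have hpd : ∀ (g : EuclideanSpace ℝ (Fin m) → ℝ) (l : Fin m),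
      Measurable (fun x => pd l g x) := fun g l => measurable_fderiv_apply_const ℝ g _
  have hmeas : Measurable (fun x => ∑ k : Fin m, ∑ l : Fin m,
      ∑ a : (Fin m × Fin m) ⊕ Unit, (pd l (pd k (uTilde m α a)) x) ^ 2) := by
    apply Finset.measurable_sum
    intro k _
    apply Finset.measurable_sum
    intro l _
    apply Finset.measurable_sum
    intro a _
    exact (hpd (pd k (uTilde m α a)) l).pow_const 2
  set C : ℝ := ((m:ℝ)*(m:ℝ)*((m:ℝ)*(m:ℝ)+1)) * (Kc m α^2*400) with hC
  have hbd : ∀ᵐ x ∂(volume.restrict (unitBall m)),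
      ‖∑ k : Fin m, ∑ l : Fin m, ∑ a : (Fin m × Fin m) ⊕ Unit,
        (pd l (pd k (uTilde m α a)) x) ^ 2‖ ≤ C * (‖x‖^4)⁻¹ := by
    refine hae.mono fun x hx => ?_
    have hN := Nn_pos hx
    have per : ∀ (k l : Fin m) (a : (Fin m × Fin m) ⊕ Unit),
        (pd l (pd k (uTilde m α a)) x)^2 ≤ Kc m α^2*400*(‖x‖^4)⁻¹ := by
      intro k l a
      match a with
      | Sum.inl (i, j) =>
        rw [pd2_uTilde_inl α i j k l hx]
        have hb := F2_bound i j k l hx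
        calc (Kc m α * F2 i j k l x)^2 = Kc m α^2 * |F2 i j k l x|^2 := by
              rw [sq_abs]; ring
          _ ≤ Kc m α^2 * (20*(Nn x)⁻¹)^2 := by
              apply mul_le_mul_of_nonneg_left _ (sq_nonneg _)
              exact pow_le_pow_left₀ (abs_nonneg _) hb 2
          _ = Kc m α^2*400*(‖x‖^4)⁻¹ := by
              rw [norm4]
              have : Nn x ≠ 0 := hN.ne'
              field_simp
              ring
      | Sum.inr u =>
        rw [pd2_uTilde_inr]
        have : (0:ℝ) ≤ Kc m α^2*400*(‖x‖^4)⁻¹ := by positivity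
        simpa using this
    have h1 : ∑ k : Fin m, ∑ l : Fin m, ∑ a : (Fin m × Fin m) ⊕ Unit,
        (pd l (pd k (uTilde m α a)) x) ^ 2
        ≤ ∑ _k : Fin m, ∑ _l : Fin m, ∑ _a : (Fin m × Fin m) ⊕ Unit,
            (Kc m α^2*400*(‖x‖^4)⁻¹) :=
      Finset.sum_le_sum fun k _ => Finset.sum_le_sum fun l _ =>
        Finset.sum_le_sum fun a _ => per k l a
    have h2 : ∑ _k : Fin m, ∑ _l : Fin m, ∑ _a : (Fin m × Fin m) ⊕ Unit,
        (Kc m α^2*400*(‖x‖^4)⁻¹) = C * (‖x‖^4)⁻¹ := by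
      simp only [Finset.sum_const, Finset.card_univ, Fintype.card_sum, Fintype.card_prod,
        Fintype.card_fin, Fintype.card_unit, nsmul_eq_mul, hC]
      push_cast
      ring
    have h0 : (0:ℝ) ≤ ∑ k : Fin m, ∑ l : Fin m, ∑ a : (Fin m × Fin m) ⊕ Unit,
        (pd l (pd k (uTilde m α a)) x) ^ 2 := by
      apply Finset.sum_nonneg; intro k _
      apply Finset.sum_nonneg; intro l _
      apply Finset.sum_nonneg; intro a _
      positivity
    rw [Real.norm_of_nonneg h0]
    calc _ ≤ _ := h1
      _ = _ := h2
  have I5 : IntegrableOn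
      (fun x => ∑ k : Fin m, ∑ l : Fin m, ∑ a : (Fin m × Fin m) ⊕ Unit,
        (pd l (pd k (uTilde m α a)) x) ^ 2) (unitBall m) :=
    ((integrableOn_ball_inv_pow hm0 4 hm4).const_mul C).mono'
      hmeas.aestronglyMeasurable hbd
  exact ⟨I1, I2, I3, I4, I5⟩
end
end
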